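/- arXiv:2206.15019 — 6 statements merged into one kernel-verified Lean document; each statement's English description precedes it below -/
import Mathlib

section
/- Let X and K be real Hilbert spaces, f ∈ Γ₀(X), g ∈ Γ₀(K), and A : X → K a bounded linear operator such that S_p := argmin_{x∈X}(f(x) + g(Ax)) ≠ ∅ and the qualification condition 0 ∈ sri(dom(g) − A(dom(f))) holds. Define F(x,y) := f(x) + g(y), N(Ǎ) := {(x, Ax) : x ∈ X} with orthogonal projection P_{N(Ǎ)}, and T_DRSI := (2 prox_F − I) ∘ (2 P_{N(Ǎ)} − I) on X × K. If the three sets S_p, ∂f(S_p) := ⋃_{x∈S_p} ∂f(x), and ⋃_{x∈S_p}({ν ∈ K : −A*ν ∈ ∂f(x)} ∩ ∂g(Ax)) are bounded, then Fix(T_DRSI) is a bounded subset of X × K. -/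
noncomputable section

open Filter Topology Bornology
open scoped InnerProductSpace Pointwise Classical

/-- A function with values in the extended reals is *proper* if it is somewhere finite
and nowhere `⊥`. -/
def EProper {H : Type*} (f : H → EReal) : Prop :=
  (∃ x, f x ≠ ⊤) ∧ ∀ x, f x ≠ ⊥

/-- Convexity for extended-real-valued functions. -/
def EConvex {H : Type*} [AddCommGroup H] [Module ℝ H] (f : H → EReal) : Prop :=
  ∀ x y : H, ∀ a b : ℝ, 0 ≤ a → 0 ≤ b → a + b = 1 →
    f (a • x + b • y) ≤ (a : EReal) * f x + (b : EReal) * f y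

/-- The class `Γ₀(H)` of proper lower semicontinuous convex functions `H → (-∞, +∞]`. -/
def Gamma0 {H : Type*} [NormedAddCommGroup H] [NormedSpace ℝ H] (f : H → EReal) : Prop :=
  EProper f ∧ LowerSemicontinuous f ∧ EConvex f

/-- Effective domain `dom f = {x | f x < ∞}`. -/
def edom {H : Type*} (f : H → EReal) : Set H := {x | f x ≠ ⊤}

/-- Set of global minimizers of `f`. -/
def argminSet {H : Type*} (f : H → EReal) : Set H := {x | ∀ y, f x ≤ f y}

/-- Fenchel conjugate `f*(u) = sup_x (⟪x,u⟫ - f x)`. -/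
def econj {H : Type*} [NormedAddCommGroup H] [InnerProductSpace ℝ H]
    (f : H → EReal) (u : H) : EReal :=
  ⨆ x : H, ((⟪x, u⟫_ℝ : EReal) - f x)

/-- Subdifferential `∂f(x) = {u | ∀ y, ⟪y - x, u⟫ + f x ≤ f y}`. -/
def esubdiff {H : Type*} [NormedAddCommGroup H] [InnerProductSpace ℝ H]
    (f : H → EReal) (x : H) : Set H :=
  {u | ∀ y : H, ((⟪y - x, u⟫_ℝ : ℝ) : EReal) + f x ≤ f y}

/-- `p` is the proximal point of `f` at `x`, i.e. a minimizer of
`y ↦ f y + (1/2)‖y - x‖²` (which is unique for `f ∈ Γ₀`). -/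
def IsProxPt {H : Type*} [NormedAddCommGroup H] (f : H → EReal) (x p : H) : Prop :=
  ∀ y : H, f p + ((((1:ℝ)/2) * ‖p - x‖ ^ 2 : ℝ) : EReal)
    ≤ f y + ((((1:ℝ)/2) * ‖y - x‖ ^ 2 : ℝ) : EReal)

/-- Indicator function of a set, with values in the extended reals. -/
def eind {H : Type*} (C : Set H) : H → EReal := fun x => if x ∈ C then 0 else ⊤

/-- Strong relative interior: the points `x ∈ C` such that the cone generated by `C - x`
coincides with the closed linear span of `C - x`. -/
def sriSet {H : Type*} [NormedAddCommGroup H] [NormedSpace ℝ H] (C : Set H) : Set H :=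
  {x | x ∈ C ∧
    {y | ∃ t : ℝ, 0 < t ∧ ∃ c ∈ C, y = t • (c - x)} =
      closure ((Submodule.span ℝ ((fun c => c - x) '' C) : Submodule ℝ H) : Set H)}

lemma aux_finite_of_subdiff {H : Type*} [NormedAddCommGroup H] [InnerProductSpace ℝ H]
    {f : H → EReal} (hf : EProper f) {x u : H} (hu : u ∈ esubdiff f x) : f x ≠ ⊤ := by
  obtain ⟨⟨x₀, hx₀⟩, hbot⟩ := hf
  intro htop
  have h := hu x₀
  rw [htop, EReal.add_top_of_ne_bot (by exact EReal.coe_ne_bot _)] at h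
  exact hx₀ (top_le_iff.mp h)

lemma aux_limit {c d : ℝ} (hd : 0 ≤ d)
    (h : ∀ t : ℝ, 0 < t → t ≤ 1 → 0 ≤ c + t / 2 * d) : 0 ≤ c := by
  by_contra hc
  push_neg at hc
  have hden : (0:ℝ) < d + 1 := by linarith
  have htpos : 0 < min 1 (-c / (d + 1)) :=
    lt_min one_pos (div_pos (by linarith) hden)
  have hk := h _ htpos (min_le_left _ _)
  have ht3 : min 1 (-c / (d + 1)) * (d + 1) ≤ -c := by
    rw [← le_div_iff₀ hden]; exact min_le_right _ _
  nlinarith [hk, ht3, htpos, hc, hd]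

lemma aux_prox_subdiff {H : Type*} [NormedAddCommGroup H] [InnerProductSpace ℝ H]
    {f : H → EReal} (hf : Gamma0 f) {x p : H} (hp : IsProxPt f x p) :
    x - p ∈ esubdiff f p := by
  obtain ⟨⟨⟨x₀, hx₀⟩, hbot⟩, _, hconv⟩ := hf
  have hfpt : f p ≠ ⊤ := by
    intro htop
    have h := hp x₀
    rw [htop] at h
    rw [EReal.top_add_of_ne_bot (EReal.coe_ne_bot _)] at h
    have hlt : f x₀ + ((((1:ℝ)/2) * ‖x₀ - x‖ ^ 2 : ℝ) : EReal) < ⊤ :=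
      EReal.add_lt_top hx₀ (EReal.coe_ne_top _)
    exact absurd (top_le_iff.mp h) hlt.ne
  set fp : ℝ := (f p).toReal with hfpdef
  have hfp : f p = (fp : EReal) := (EReal.coe_toReal hfpt (hbot p)).symm
  intro y
  by_cases hy : f y = ⊤
  · rw [hy]; exact le_top
  set fy : ℝ := (f y).toReal with hfydef
  have hfy : f y = (fy : EReal) := (EReal.coe_toReal hy (hbot y)).symm
  have key : ∀ t : ℝ, 0 < t → t ≤ 1 →
      0 ≤ fy - fp + ⟪p - x, y - p⟫_ℝ + t / 2 * ‖y - p‖ ^ 2 := by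
    intro t ht ht1
    have hq : (1 - t) • p + t • y = p + t • (y - p) := by
      rw [smul_sub, sub_smul, one_smul]; abel
    have hcv := hconv p y (1 - t) t (by linarith) (le_of_lt ht) (by ring)
    rw [hq, hfp, hfy, ← EReal.coe_mul, ← EReal.coe_mul, ← EReal.coe_add] at hcv
    have hprox := hp (p + t • (y - p))
    have h2 : (fp : EReal) + ((((1:ℝ)/2) * ‖p - x‖ ^ 2 : ℝ) : EReal)
        ≤ (((1 - t) * fp + t * fy : ℝ) : EReal)
          + ((((1:ℝ)/2) * ‖p + t • (y - p) - x‖ ^ 2 : ℝ) : EReal) := by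
      rw [← hfp]
      exact hprox.trans (add_le_add hcv le_rfl)
    rw [← EReal.coe_add, ← EReal.coe_add, EReal.coe_le_coe_iff] at h2
    have hnorm : ‖p + t • (y - p) - x‖ ^ 2
        = ‖p - x‖ ^ 2 + 2 * (t * ⟪p - x, y - p⟫_ℝ) + t ^ 2 * ‖y - p‖ ^ 2 := by
      have : p + t • (y - p) - x = (p - x) + t • (y - p) := by abel
      rw [this, norm_add_sq_real, real_inner_smul_right, norm_smul, Real.norm_eq_abs,
        abs_of_pos ht, mul_pow]
    rw [hnorm] at h2
    have h3 : 0 ≤ t * (fy - fp + ⟪p - x, y - p⟫_ℝ + t / 2 * ‖y - p‖ ^ 2) := by nlinarith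
    nlinarith
  have hmain : 0 ≤ fy - fp + ⟪p - x, y - p⟫_ℝ :=
    aux_limit (by positivity) key
  have hip : ⟪y - p, x - p⟫_ℝ + ⟪p - x, y - p⟫_ℝ = 0 := by
    rw [show p - x = -(x - p) from (neg_sub x p).symm, inner_neg_left,
      real_inner_comm (x - p) (y - p)]
    ring
  rw [hfp, hfy, ← EReal.coe_add, EReal.coe_le_coe_iff]
  linarith

lemma aux_perp {s m : ℝ} (hm : 0 ≤ m) (h : ∀ t : ℝ, 0 ≤ -2*t*s + t^2*m) : s = 0 := by
  have hden : (0:ℝ) < m + 1 := by linarith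
  have hk := h (s / (m + 1))
  have h2 : 0 ≤ (-2*(s/(m+1))*s + (s/(m+1))^2*m) * (m+1)^2 :=
    mul_nonneg hk (by positivity)
  have h3 : (-2*(s/(m+1))*s + (s/(m+1))^2*m) * (m+1)^2 = -(s^2*(m+2)) := by
    field_simp
    ring
  have hs2 : s ^ 2 = 0 := le_antisymm (by nlinarith) (sq_nonneg s)
  exact pow_eq_zero_iff two_ne_zero |>.mp hs2

/-- Theorem 5(a): boundedness of `Fix T_DRSI`.
If `S_p`, `∂f(S_p)`, and `⋃_{x ∈ S_p} ({ν | -A*ν ∈ ∂f(x)} ∩ ∂g(Ax))` are bounded, then the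
fixed point set of the DRS operator of Type-I is bounded in `X × K`. -/
theorem statement13
    {X K : Type*} [NormedAddCommGroup X] [InnerProductSpace ℝ X] [CompleteSpace X]
    [NormedAddCommGroup K] [InnerProductSpace ℝ K] [CompleteSpace K]
    (f : X → EReal) (g : K → EReal) (hf : Gamma0 f) (hg : Gamma0 g)
    (A : X →L[ℝ] K)
    (Sp : Set X) (hSpdef : Sp = argminSet (fun x => f x + g (A x)))
    (hSp : Sp.Nonempty)
    (hqc : (0 : K) ∈ sriSet (edom g - (fun x => A x) '' edom f))
    (hbSp : IsBounded Sp)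
    (hbdf : IsBounded (⋃ x ∈ Sp, esubdiff f x))
    (hbdual : IsBounded
      (⋃ x ∈ Sp, ({ν : K | -(A.adjoint ν) ∈ esubdiff f x} ∩ esubdiff g (A x))))
    (proxf : X → X) (proxg : K → K)
    (hproxf : ∀ x, IsProxPt f x (proxf x)) (hproxg : ∀ y, IsProxPt g y (proxg y))
    (P : X × K → X × K)
    (hPmem : ∀ z : X × K, A (P z).1 = (P z).2)
    (hPmin : ∀ z w : X × K, A w.1 = w.2 →
      ‖z.1 - (P z).1‖ ^ 2 + ‖z.2 - (P z).2‖ ^ 2 ≤ ‖z.1 - w.1‖ ^ 2 + ‖z.2 - w.2‖ ^ 2)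
    (T : X × K → X × K)
    (hT : ∀ z : X × K, T z =
      ((2:ℝ) • proxf ((2:ℝ) • P z - z).1 - ((2:ℝ) • P z - z).1,
       (2:ℝ) • proxg ((2:ℝ) • P z - z).2 - ((2:ℝ) • P z - z).2)) :
    IsBounded {z : X × K | T z = z} := by
  have hbnd : IsBounded ((Sp - ⋃ x ∈ Sp, esubdiff f x) ×ˢ
      ((fun x => A x) '' Sp - ⋃ x ∈ Sp,
        ({ν : K | -(A.adjoint ν) ∈ esubdiff f x} ∩ esubdiff g (A x)))) :=
    (hbSp.sub hbdf).prod ((A.lipschitz.isBounded_image hbSp).sub hbdual)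
  refine hbnd.subset ?_
  intro z hz
  simp only [Set.mem_setOf_eq] at hz
  rw [hT z] at hz
  have h1 : (2:ℝ) • proxf ((2:ℝ) • P z - z).1 - ((2:ℝ) • P z - z).1 = z.1 :=
    congrArg Prod.fst hz
  have h2 : (2:ℝ) • proxg ((2:ℝ) • P z - z).2 - ((2:ℝ) • P z - z).2 = z.2 :=
    congrArg Prod.snd hz
  have hw1 : ((2:ℝ) • P z - z).1 = (2:ℝ) • (P z).1 - z.1 := rfl
  have hw2 : ((2:ℝ) • P z - z).2 = (2:ℝ) • (P z).2 - z.2 := rfl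
  set xb : X := (P z).1 with hxb
  set yb : K := (P z).2 with hyb
  have hAxb : A xb = yb := hPmem z
  have hpf : proxf ((2:ℝ) • P z - z).1 = xb := by
    apply smul_right_injective X (r := (2:ℝ)) (by norm_num)
    show (2:ℝ) • proxf ((2:ℝ) • P z - z).1 = (2:ℝ) • xb
    have : (2:ℝ) • proxf ((2:ℝ) • P z - z).1 = z.1 + ((2:ℝ) • P z - z).1 := by
      rw [← h1]; abel
    rw [this, hw1]
    module
  have hpg : proxg ((2:ℝ) • P z - z).2 = yb := by
    apply smul_right_injective K (r := (2:ℝ)) (by norm_num)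
    show (2:ℝ) • proxg ((2:ℝ) • P z - z).2 = (2:ℝ) • yb
    have : (2:ℝ) • proxg ((2:ℝ) • P z - z).2 = z.2 + ((2:ℝ) • P z - z).2 := by
      rw [← h2]; abel
    rw [this, hw2]
    module
  -- subgradient memberships
  have hu : xb - z.1 ∈ esubdiff f xb := by
    have h := aux_prox_subdiff hf (hproxf (((2:ℝ) • P z - z).1))
    rw [hpf] at h
    have e : ((2:ℝ) • P z - z).1 - xb = xb - z.1 := by rw [hw1]; module
    rwa [e] at h
  have hv : yb - z.2 ∈ esubdiff g yb := by
    have h := aux_prox_subdiff hg (hproxg (((2:ℝ) • P z - z).2))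
    rw [hpg] at h
    have e : ((2:ℝ) • P z - z).2 - yb = yb - z.2 := by rw [hw2]; module
    rwa [e] at h
  -- orthogonality
  have horth : ∀ hh : X, ⟪z.1 - xb, hh⟫_ℝ + ⟪z.2 - yb, A hh⟫_ℝ = 0 := by
    intro hh
    apply aux_perp (m := ‖hh‖ ^ 2 + ‖A hh‖ ^ 2) (by positivity)
    intro t
    have hmem : A (xb + t • hh, yb + t • A hh).1 = (xb + t • hh, yb + t • A hh).2 := by
      simp only [map_add, map_smul, hAxb]
    have hle := hPmin z (xb + t • hh, yb + t • A hh) hmem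
    simp only [← hxb, ← hyb] at hle
    have e1 : z.1 - (xb + t • hh) = (z.1 - xb) - t • hh := by abel
    have e2 : z.2 - (yb + t • A hh) = (z.2 - yb) - t • A hh := by abel
    rw [e1, e2] at hle
    have n1 : ‖(z.1 - xb) - t • hh‖ ^ 2
        = ‖z.1 - xb‖ ^ 2 - 2 * (t * ⟪z.1 - xb, hh⟫_ℝ) + t ^ 2 * ‖hh‖ ^ 2 := by
      rw [norm_sub_sq_real, real_inner_smul_right, norm_smul, Real.norm_eq_abs,
        mul_pow, sq_abs]
    have n2 : ‖(z.2 - yb) - t • A hh‖ ^ 2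
        = ‖z.2 - yb‖ ^ 2 - 2 * (t * ⟪z.2 - yb, A hh⟫_ℝ) + t ^ 2 * ‖A hh‖ ^ 2 := by
      rw [norm_sub_sq_real, real_inner_smul_right, norm_smul, Real.norm_eq_abs,
        mul_pow, sq_abs]
    rw [n1, n2] at hle
    nlinarith [hle]
  have hadj : (z.1 - xb) + A.adjoint (z.2 - yb) = 0 := by
    have h0 := horth ((z.1 - xb) + A.adjoint (z.2 - yb))
    rw [← ContinuousLinearMap.adjoint_inner_left A, ← inner_add_left] at h0
    rwa [inner_self_eq_zero] at h0
  have hueq : xb - z.1 = -(A.adjoint (yb - z.2)) := by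
    have h4 := eq_neg_of_add_eq_zero_left hadj
    have h3 : xb - z.1 = A.adjoint (z.2 - yb) := by
      rw [← neg_sub z.1 xb, h4, neg_neg]
    rw [h3, ← map_neg, neg_sub]
  -- xb is a primal solution
  have hxSp : xb ∈ Sp := by
    rw [hSpdef]
    intro y
    show f xb + g (A xb) ≤ f y + g (A y)
    by_cases hyt : f y = ⊤
    · rw [hyt, EReal.top_add_of_ne_bot (hg.1.2 _)]; exact le_top
    by_cases hgt : g (A y) = ⊤
    · rw [hgt, EReal.add_top_of_ne_bot (hf.1.2 _)]; exact le_top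
    have hfx : f xb ≠ ⊤ := aux_finite_of_subdiff hf.1 hu
    have hgx : g (A xb) ≠ ⊤ := by
      rw [hAxb]; exact aux_finite_of_subdiff hg.1 hv
    have hfxr : f xb = ((f xb).toReal : EReal) := (EReal.coe_toReal hfx (hf.1.2 _)).symm
    have hfyr : f y = ((f y).toReal : EReal) := (EReal.coe_toReal hyt (hf.1.2 _)).symm
    have hgxr : g (A xb) = ((g (A xb)).toReal : EReal) :=
      (EReal.coe_toReal hgx (hg.1.2 _)).symm
    have hgyr : g (A y) = ((g (A y)).toReal : EReal) :=
      (EReal.coe_toReal hgt (hg.1.2 _)).symm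
    have hu2 := hu y
    rw [hfxr, hfyr, ← EReal.coe_add, EReal.coe_le_coe_iff] at hu2
    have hvA : yb - z.2 ∈ esubdiff g (A xb) := by rw [hAxb]; exact hv
    have hv2 := hvA (A y)
    rw [hgxr, hgyr, ← EReal.coe_add, EReal.coe_le_coe_iff] at hv2
    have hsum : ⟪y - xb, xb - z.1⟫_ℝ + ⟪A y - A xb, yb - z.2⟫_ℝ = 0 := by
      rw [hueq, inner_neg_right,
        real_inner_comm (ContinuousLinearMap.adjoint A (yb - z.2)) (y - xb),
        ContinuousLinearMap.adjoint_inner_left, ← map_sub,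
        real_inner_comm (yb - z.2) (A (y - xb))]
      ring
    rw [hfxr, hgxr, hfyr, hgyr, ← EReal.coe_add, ← EReal.coe_add, EReal.coe_le_coe_iff]
    linarith [hu2, hv2, hsum]
  -- conclude membership
  have hz1 : z.1 = xb - (xb - z.1) := by abel
  have hz2 : z.2 = A xb - (yb - z.2) := by rw [hAxb]; abel
  constructor
  · rw [hz1]
    exact Set.sub_mem_sub hxSp (Set.mem_biUnion hxSp hu)
  · rw [hz2]
    refine Set.sub_mem_sub ⟨xb, hxSp, rfl⟩ (Set.mem_biUnion hxSp ⟨?_, ?_⟩)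
    · show -(A.adjoint (yb - z.2)) ∈ esubdiff f xb
      rw [← hueq]; exact hu
    · show yb - z.2 ∈ esubdiff g (A xb)
      rw [hAxb]; exact hv
end
end

section
/- Let X and K be real Hilbert spaces, f ∈ Γ₀(X), g ∈ Γ₀(K), and A : X → K a bounded linear operator such that S_p := argmin_{x∈X}(f(x) + g(Ax)) ≠ ∅, the qualification condition 0 ∈ sri(dom(g) − A(dom(f))) holds, and ‖Ǎ‖_op ≤ 1/u for some u > 0, where Ǎ : X × K → K : (x,y) ↦ Ax − y. Define T_LAL : X × K × K → X × K × K : (x,y,ν) ↦ (x_T, y_T, ν_T) by x_T := prox_f(x − u²(A*Ax − A*y) + u A*ν), y_T := prox_g(y − u²(−Ax + y) − u ν), ν_T := ν − u(A x_T − y_T). If the two sets S_p and ⋃_{x∈S_p}({ν ∈ K : −A*ν ∈ ∂f(x)} ∩ ∂g(Ax)) are bounded, then Fix(T_LAL) is a bounded subset of X × K × K. -/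
noncomputable section

open Filter Topology Bornology
open scoped InnerProductSpace Pointwise Classical

/-- If the subdifferential of a proper function is nonempty at `x`, then `f x` is finite. -/
lemma esubdiff_ne_top {H : Type*} [NormedAddCommGroup H] [InnerProductSpace ℝ H]
    {f : H → EReal} (hfp : EProper f) {x v : H} (h : v ∈ esubdiff f x) : f x ≠ ⊤ := by
  obtain ⟨⟨y0, hy0⟩, hbot⟩ := hfp
  intro htop
  have := h y0
  rw [htop] at this
  have h1 : ((⟪y0 - x, v⟫_ℝ : ℝ) : EReal) + ⊤ = ⊤ := EReal.coe_add_top _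
  rw [h1, top_le_iff] at this
  exact hy0 this

/-- The prox point is a subgradient point: `z - p ∈ ∂f(p)`. -/
lemma proxpt_mem_esubdiff {H : Type*} [NormedAddCommGroup H] [InnerProductSpace ℝ H]
    {f : H → EReal} (hfp : EProper f) (hfc : EConvex f) {z p : H}
    (hp : IsProxPt f z p) : z - p ∈ esubdiff f p := by
  obtain ⟨⟨y0, hy0⟩, hbot⟩ := hfp
  have hpne : f p ≠ ⊤ := by
    intro htop
    have h0 := hp y0
    rw [htop] at h0
    have h1 : (⊤ : EReal) + ((((1:ℝ)/2) * ‖p - z‖ ^ 2 : ℝ) : EReal) = ⊤ := EReal.top_add_coe _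
    rw [h1, top_le_iff] at h0
    have : f y0 = ⊤ := by
      by_contra hne
      have := EReal.add_lt_top hne (EReal.coe_ne_top (((1:ℝ)/2) * ‖y0 - z‖ ^ 2))
      rw [h0] at this
      exact lt_irrefl _ this
    exact hy0 this
  set s := (f p).toReal with hs
  have hps : f p = (s : EReal) := (EReal.coe_toReal hpne (hbot p)).symm
  intro y
  by_cases hy : f y = ⊤
  · rw [hy]; exact le_top
  set r := (f y).toReal with hr
  have hyr : f y = (r : EReal) := (EReal.coe_toReal hy (hbot y)).symm
  rw [hps, hyr, ← EReal.coe_add, EReal.coe_le_coe_iff]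
  -- real goal: ⟪y - p, z - p⟫ + s ≤ r
  have key : ∀ t : ℝ, 0 < t → t ≤ 1 →
      ⟪y - p, z - p⟫_ℝ ≤ (r - s) + t * ((1/2) * ‖y - p‖ ^ 2) := by
    intro t ht ht1
    have hcv := hfc p y (1 - t) t (by linarith) ht.le (by ring)
    have hineq := hp ((1 - t) • p + t • y)
    rw [hps, hyr] at hcv
    have hcv' : f ((1 - t) • p + t • y) ≤ (((1 - t) * s + t * r : ℝ) : EReal) := by
      refine hcv.trans_eq ?_
      rw [← EReal.coe_mul, ← EReal.coe_mul, ← EReal.coe_add]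
    have hchain : (s : EReal) + ((((1:ℝ)/2) * ‖p - z‖ ^ 2 : ℝ) : EReal)
        ≤ (((1 - t) * s + t * r : ℝ) : EReal)
          + ((((1:ℝ)/2) * ‖(1 - t) • p + t • y - z‖ ^ 2 : ℝ) : EReal) := by
      rw [hps] at hineq
      exact hineq.trans (add_le_add hcv' le_rfl)
    rw [← EReal.coe_add, ← EReal.coe_add, EReal.coe_le_coe_iff] at hchain
    have hexp : (1 - t) • p + t • y - z = (p - z) + t • (y - p) := by
      rw [sub_smul, one_smul, smul_sub]; abel
    rw [hexp] at hchain
    have hnorm : ‖(p - z) + t • (y - p)‖ ^ 2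
        = ‖p - z‖ ^ 2 + 2 * (t * ⟪p - z, y - p⟫_ℝ) + t ^ 2 * ‖y - p‖ ^ 2 := by
      rw [norm_add_sq_real, real_inner_smul_right, norm_smul, mul_pow, Real.norm_eq_abs,
        sq_abs]
    have hip : ⟪p - z, y - p⟫_ℝ = -⟪y - p, z - p⟫_ℝ := by
      rw [← inner_neg_right, neg_sub, real_inner_comm]
    rw [hnorm, hip] at hchain
    have h3 : t * ⟪y - p, z - p⟫_ℝ ≤ t * ((r - s) + t * ((1/2) * ‖y - p‖ ^ 2)) := by
      nlinarith
    exact le_of_mul_le_mul_left h3 ht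
  have hfin : ⟪y - p, z - p⟫_ℝ ≤ r - s := by
    have hc : (0:ℝ) ≤ (1/2) * ‖y - p‖ ^ 2 := by positivity
    refine le_of_forall_pos_le_add ?_
    intro ε hε
    set c := (1/2) * ‖y - p‖ ^ 2 with hcdef
    set t := min 1 (ε / (c + 1)) with htdef
    have ht0 : 0 < t := lt_min one_pos (div_pos hε (by linarith))
    have ht1 : t ≤ 1 := min_le_left _ _
    have htc : t * c ≤ ε := by
      have h1 : t ≤ ε / (c + 1) := min_le_right _ _
      have : t * c ≤ (ε / (c + 1)) * c :=
        mul_le_mul_of_nonneg_right h1 hc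
      calc t * c ≤ (ε / (c + 1)) * c := this
        _ ≤ (ε / (c + 1)) * (c + 1) := by
            apply mul_le_mul_of_nonneg_left (by linarith) (by positivity)
        _ = ε := by field_simp
    have := key t ht0 ht1
    linarith
  linarith

/-- Theorem 5(b): boundedness of `Fix T_LAL`.
If `S_p` and `⋃_{x ∈ S_p} ({ν | -A*ν ∈ ∂f(x)} ∩ ∂g(Ax))` are bounded, then the fixed point
set of the LAL operator is bounded in `X × K × K`. -/
theorem statement14
    {X K : Type*} [NormedAddCommGroup X] [InnerProductSpace ℝ X] [CompleteSpace X]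
    [NormedAddCommGroup K] [InnerProductSpace ℝ K] [CompleteSpace K]
    (f : X → EReal) (g : K → EReal) (hf : Gamma0 f) (hg : Gamma0 g)
    (A : X →L[ℝ] K)
    (Sp : Set X) (hSpdef : Sp = argminSet (fun x => f x + g (A x)))
    (hSp : Sp.Nonempty)
    (hqc : (0 : K) ∈ sriSet (edom g - (fun x => A x) '' edom f))
    (u : ℝ) (hu : 0 < u)
    (hAcheck : ∀ (x : X) (y : K), ‖A x - y‖ ≤ (1 / u) * Real.sqrt (‖x‖ ^ 2 + ‖y‖ ^ 2))
    (hbSp : IsBounded Sp)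
    (hbdual : IsBounded
      (⋃ x ∈ Sp, ({ν : K | -(A.adjoint ν) ∈ esubdiff f x} ∩ esubdiff g (A x))))
    (proxf : X → X) (proxg : K → K)
    (hproxf : ∀ x, IsProxPt f x (proxf x)) (hproxg : ∀ y, IsProxPt g y (proxg y))
    (T : X × K × K → X × K × K)
    (hT : ∀ (x : X) (y ν : K), T (x, y, ν) =
      (proxf (x - (u ^ 2) • (A.adjoint (A x) - A.adjoint y) + u • A.adjoint ν),
       proxg (y - (u ^ 2) • (-(A x) + y) - u • ν),
       ν - u • (A (proxf (x - (u ^ 2) • (A.adjoint (A x) - A.adjoint y) + u • A.adjoint ν))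
                 - proxg (y - (u ^ 2) • (-(A x) + y) - u • ν)))) :
    IsBounded {w : X × K × K | T w = w} := by
  classical
  set D := (⋃ x ∈ Sp, ({ν : K | -(A.adjoint ν) ∈ esubdiff f x} ∩ esubdiff g (A x))) with hD
  have hsub : {w : X × K × K | T w = w} ⊆
      Sp ×ˢ (((fun x => A x) '' Sp) ×ˢ ((fun v : K => (-u⁻¹) • v) '' D)) := by
    rintro ⟨x, y, ν⟩ hw
    simp only [Set.mem_setOf_eq] at hw
    rw [hT x y ν, Prod.mk.injEq, Prod.mk.injEq] at hw
    obtain ⟨h1, h2, h3⟩ := hw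
    rw [h1, h2] at h3
    have hAxy : A x = y := by
      have h4 : u • (A x - y) = 0 := by
        have := sub_eq_zero.mpr h3
        rw [sub_sub_cancel_left] at this
        rw [← neg_eq_zero]; exact this
      have := smul_eq_zero.mp h4
      rcases this with h | h
      · exact absurd h (ne_of_gt hu)
      · exact sub_eq_zero.mp h
    have hz1 : x - (u ^ 2) • (A.adjoint (A x) - A.adjoint y) + u • A.adjoint ν
        = x + u • A.adjoint ν := by
      rw [hAxy, sub_self, smul_zero, sub_zero]
    have hz2 : y - (u ^ 2) • (-(A x) + y) - u • ν = y - u • ν := by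
      rw [hAxy, neg_add_cancel, smul_zero, sub_zero]
    -- subgradient inclusions
    have hfx : u • A.adjoint ν ∈ esubdiff f x := by
      have hpp := hproxf (x - (u ^ 2) • (A.adjoint (A x) - A.adjoint y) + u • A.adjoint ν)
      have := proxpt_mem_esubdiff hf.1 hf.2.2 hpp
      rw [h1, hz1, add_sub_cancel_left] at this
      exact this
    have hgy : -(u • ν) ∈ esubdiff g (A x) := by
      have hpp := hproxg (y - (u ^ 2) • (-(A x) + y) - u • ν)
      have := proxpt_mem_esubdiff hg.1 hg.2.2 hpp
      rw [h2, hz2, sub_sub_cancel_left] at this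
      rw [hAxy]
      exact this
    -- ν' := -(u • ν) belongs to the dual set
    have hdualf : -(A.adjoint (-(u • ν))) ∈ esubdiff f x := by
      rw [map_neg, neg_neg, map_smul]
      exact hfx
    -- x ∈ Sp
    have hfxne : f x ≠ ⊤ := esubdiff_ne_top hf.1 hfx
    have hgAxne : g (A x) ≠ ⊤ := esubdiff_ne_top hg.1 hgy
    set s := (f x).toReal with hsdef
    set q := (g (A x)).toReal with hqdef
    have hfs : f x = (s : EReal) := (EReal.coe_toReal hfxne (hf.1.2 x)).symm
    have hgq : g (A x) = (q : EReal) := (EReal.coe_toReal hgAxne (hg.1.2 (A x))).symm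
    have hxSp : x ∈ Sp := by
      rw [hSpdef]
      intro z
      have H1 := hfx z
      have H2 := hgy (A z)
      have hip1 : ⟪z - x, u • A.adjoint ν⟫_ℝ = ⟪A z - A x, u • ν⟫_ℝ := by
        rw [inner_smul_right, inner_smul_right, ContinuousLinearMap.adjoint_inner_right]
        rw [map_sub]
      have hip2 : ⟪A z - A x, -(u • ν)⟫_ℝ = -⟪A z - A x, u • ν⟫_ℝ := by
        rw [inner_neg_right]
      set a := ⟪A z - A x, u • ν⟫_ℝ with hadef
      rw [hip1, hfs] at H1
      rw [hip2, hgq] at H2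
      have Hsum := add_le_add H1 H2
      have hlhs : ((a : ℝ) : EReal) + (s : EReal) + (-((a : ℝ) : EReal) + (q : EReal))
          = ((s + q : ℝ) : EReal) := by
        rw [← EReal.coe_neg, ← EReal.coe_add, ← EReal.coe_add, ← EReal.coe_add,
          EReal.coe_eq_coe_iff]
        ring
      rw [EReal.coe_neg] at Hsum
      rw [hlhs] at Hsum
      show f x + g (A x) ≤ f z + g (A z)
      rw [hfs, hgq, ← EReal.coe_add]
      exact Hsum
    refine ⟨hxSp, ⟨x, hxSp, hAxy⟩, ?_⟩
    refine ⟨-(u • ν), ?_, ?_⟩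
    · rw [hD]
      exact Set.mem_biUnion hxSp ⟨hdualf, hgy⟩
    · show (-u⁻¹) • -(u • ν) = ν
      have hmu : (-u⁻¹) * u = -1 := by field_simp
      rw [smul_neg, smul_smul, hmu, neg_smul, one_smul, neg_neg]
  refine IsBounded.subset ?_ hsub
  refine hbSp.prod (IsBounded.prod ?_ ?_)
  · obtain ⟨C, hC⟩ := isBounded_iff_forall_norm_le.mp hbSp
    apply isBounded_iff_forall_norm_le.mpr
    refine ⟨‖A‖ * C, ?_⟩
    rintro _ ⟨x, hx, rfl⟩
    calc ‖A x‖ ≤ ‖A‖ * ‖x‖ := A.le_opNorm x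
      _ ≤ ‖A‖ * C := by
          apply mul_le_mul_of_nonneg_left (hC x hx) (norm_nonneg A)
  · obtain ⟨C, hC⟩ := isBounded_iff_forall_norm_le.mp hbdual
    apply isBounded_iff_forall_norm_le.mpr
    refine ⟨u⁻¹ * C, ?_⟩
    rintro _ ⟨v, hv, rfl⟩
    rw [norm_smul, norm_neg, Real.norm_eq_abs, abs_inv, abs_of_pos hu]
    exact mul_le_mul_of_nonneg_left (hC v hv) (by positivity)
end
end

section
/- Let X be a real Hilbert space and K = ℝ^m. Let f ∈ Γ₀(X), g = ⊕_{i=1}^m g_i with g_i ∈ Γ₀(ℝ), and A : X → ℝ^m : x ↦ (A₁x, …, A_mx) with nonzero bounded linear functionals A_i : X → ℝ. Assume S_p := argmin_{x∈X}(f(x) + ∑_{i=1}^m g_i(A_i x)) ≠ ∅ and the qualification condition 0 ∈ sri(dom(g) − A(dom(f))) holds. Define H(x^{(1)},…,x^{(m+1)}) := ∑_{i=1}^m g_i(A_i x^{(i)}) + f(x^{(m+1)}), D := {(x^{(1)},…,x^{(m+1)}) ∈ X^{m+1} : x^{(i)} = x^{(j)} for all i,j} with orthogonal projection P_D, and T_DRSII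 := (2 prox_H − I) ∘ (2 P_D − I) on X^{m+1}. If S_p is bounded and the set ⋃_{x∈S_p}( [∏_{j=1}^m A_j*(∂g_j(A_j x))] × [∂f(x) ∩ (−∑_{i=1}^m A_i*(∂g_i(A_i x)))] ) is bounded in X^{m+1}, then Fix(T_DRSII) is a bounded subset of X^{m+1}. -/
noncomputable section

open Filter Topology Bornology
open scoped InnerProductSpace Pointwise Classical

lemma ecancel {x y : EReal} (c : ℝ) (h : x + (c:EReal) ≤ y + (c:EReal)) : x ≤ y := by
  have := EReal.addLECancellable_coe c
  rw [add_comm x, add_comm y] at h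
  exact this h

lemma esum_ne_bot {ι : Type*} (s : Finset ι) (f : ι → EReal) (h : ∀ i ∈ s, f i ≠ ⊥) :
    ∑ i ∈ s, f i ≠ ⊥ := by
  classical
  induction s using Finset.induction with
  | empty => simp
  | @insert a t hx ih =>
    rw [Finset.sum_insert hx, Ne, EReal.add_eq_bot_iff]
    push_neg
    exact ⟨h a (Finset.mem_insert_self a t), ih fun i hi => h i (Finset.mem_insert_of_mem hi)⟩

lemma esum_eq_top {ι : Type*} (s : Finset ι) (f : ι → EReal) (h : ∀ i ∈ s, f i ≠ ⊥)
    {k : ι} (hk : k ∈ s) (htop : f k = ⊤) : ∑ i ∈ s, f i = ⊤ := by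
  classical
  rw [← Finset.add_sum_erase s f hk, htop]
  exact EReal.top_add_of_ne_bot (esum_ne_bot _ _ fun i hi => h i (Finset.mem_of_mem_erase hi))

lemma ecoe_sum {ι : Type*} (s : Finset ι) (f : ι → ℝ) :
    ((∑ i ∈ s, f i : ℝ) : EReal) = ∑ i ∈ s, ((f i : ℝ) : EReal) := by
  classical
  induction s using Finset.induction with
  | empty => simp
  | @insert a t hx ih => rw [Finset.sum_insert hx, Finset.sum_insert hx, EReal.coe_add, ih]

lemma le_of_forall_pos_le_add' {a b : ℝ} (h : ∀ ε : ℝ, 0 < ε → a ≤ b + ε) : a ≤ b := by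
  by_contra hc; push_neg at hc
  have := h ((a - b)/2) (by linarith); linarith

lemma prox_subgrad {X : Type*} [NormedAddCommGroup X] [InnerProductSpace ℝ X]
    (φ : X → EReal) (hconv : EConvex φ) (hbot : ∀ x, φ x ≠ ⊥)
    (a z : X) (r : ℝ) (ha : φ a = (r : EReal))
    (hprox : ∀ y : X, ((r + 2⁻¹ * ‖a - z‖^2 : ℝ) : EReal)
        ≤ φ y + ((2⁻¹ * ‖y - z‖^2 : ℝ) : EReal)) :
    ∀ w : X, ((⟪w - a, z - a⟫_ℝ + r : ℝ) : EReal) ≤ φ w := by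
  intro w
  rcases eq_or_ne (φ w) ⊤ with hw | hw
  · rw [hw]; exact le_top
  obtain ⟨G, hG⟩ : ∃ G : ℝ, φ w = (G : EReal) :=
    ⟨(φ w).toReal, (EReal.coe_toReal hw (hbot w)).symm⟩
  rw [hG, EReal.coe_le_coe_iff]
  have key : ∀ t : ℝ, 0 < t → t ≤ 1 →
      ⟪w - a, z - a⟫_ℝ + r ≤ G + t/2 * ‖w - a‖^2 := by
    intro t ht ht1
    have hc := hconv a w (1 - t) t (by linarith) ht.le (by ring)
    rw [ha, hG] at hc
    have hc' : φ ((1-t) • a + t • w) ≤ (((1-t)*r + t*G : ℝ) : EReal) := by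
      refine hc.trans_eq ?_
      push_cast
      ring
    have hp := (hprox ((1-t) • a + t • w)).trans
      (add_le_add_left hc' (((2⁻¹ * ‖(1-t) • a + t • w - z‖^2 : ℝ) : EReal)))
    rw [← EReal.coe_add, EReal.coe_le_coe_iff] at hp
    have hpt : (1-t) • a + t • w - z = (a - z) + t • (w - a) := by module
    rw [hpt] at hp
    rw [norm_add_sq_real, real_inner_smul_right, norm_smul] at hp
    have habs : |t| = t := abs_of_pos ht
    rw [Real.norm_eq_abs, habs] at hp
    have hcomm : ⟪w - a, z - a⟫_ℝ = - ⟪a - z, w - a⟫_ℝ := by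
      rw [show (a : X) - z = -(z - a) from (neg_sub z a).symm, inner_neg_left, neg_neg,
        real_inner_comm]
    nlinarith [hp, sq_nonneg t]
  apply le_of_forall_pos_le_add'
  intro ε hε
  set q : ℝ := 2⁻¹ * ‖w - a‖^2 with hq
  have hq0 : 0 ≤ q := by positivity
  set t : ℝ := min 1 (ε / (q + 1)) with htd
  have ht0 : 0 < t := lt_min one_pos (by positivity)
  have ht1 : t ≤ 1 := min_le_left _ _
  have h2 : t ≤ ε / (q + 1) := min_le_right _ _
  have := key t ht0 ht1
  have htq : t/2 * ‖w - a‖^2 ≤ ε := by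
    have : t * (q + 1) ≤ ε := by
      rw [← le_div_iff₀ (by positivity)]; exact h2
    nlinarith [hq0, ht0.le]
  linarith


/-- Theorem 5(c): boundedness of `Fix T_DRSII`.
If `S_p` and `⋃_{x ∈ S_p} ([∏_j A_j*(∂g_j(A_j x))] × [∂f(x) ∩ (-∑_i A_i*(∂g_i(A_i x)))])`
are bounded, then the fixed point set of the DRS operator of Type-II is bounded. -/
theorem statement15
    {X : Type*} [NormedAddCommGroup X] [InnerProductSpace ℝ X] [CompleteSpace X]
    {m : ℕ}
    (f : X → EReal) (hf : Gamma0 f)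
    (gs : Fin m → ℝ → EReal) (hgs : ∀ i, Gamma0 (gs i))
    (A : Fin m → (X →L[ℝ] ℝ)) (hA : ∀ i, A i ≠ 0)
    (Sp : Set X) (hSpdef : Sp = argminSet (fun x => f x + ∑ i, gs i (A i x)))
    (hSp : Sp.Nonempty)
    (hqc : (0 : Fin m → ℝ) ∈ sriSet
      (edom (fun y : Fin m → ℝ => ∑ i, gs i (y i)) - (fun x => fun i => A i x) '' edom f))
    (hbSp : IsBounded Sp)
    (hbset : IsBounded {Z : Fin (m + 1) → X | ∃ x ∈ Sp,
      (∀ j : Fin m, Z j.castSucc ∈ (A j).adjoint '' esubdiff (gs j) (A j x)) ∧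
      Z (Fin.last m) ∈ esubdiff f x ∧
      ∃ s : Fin m → ℝ, (∀ i, s i ∈ esubdiff (gs i) (A i x)) ∧
        Z (Fin.last m) = -∑ i, (A i).adjoint (s i)})
    (Hf : (Fin (m + 1) → X) → EReal)
    (hHf : ∀ Z, Hf Z = (∑ i : Fin m, gs i (A i (Z i.castSucc))) + f (Z (Fin.last m)))
    (proxH : (Fin (m + 1) → X) → (Fin (m + 1) → X))
    (hproxH : ∀ Z W : Fin (m + 1) → X,
      Hf (proxH Z) + ((((1:ℝ)/2) * ∑ i, ‖proxH Z i - Z i‖ ^ 2 : ℝ) : EReal)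
        ≤ Hf W + ((((1:ℝ)/2) * ∑ i, ‖W i - Z i‖ ^ 2 : ℝ) : EReal))
    (T : (Fin (m + 1) → X) → (Fin (m + 1) → X))
    (hT : ∀ Z, T Z =
      (2:ℝ) • proxH (fun i => (2:ℝ) • (((m:ℝ) + 1)⁻¹ • ∑ j, Z j) - Z i)
        - (fun i => (2:ℝ) • (((m:ℝ) + 1)⁻¹ • ∑ j, Z j) - Z i)) :
    IsBounded {Z : Fin (m + 1) → X | T Z = Z} := by
  rw [isBounded_iff_forall_norm_le] at hbSp hbset ⊢
  obtain ⟨C1, hC1⟩ := hbSp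
  obtain ⟨C2, hC2⟩ := hbset
  -- a point where the objective is finite
  obtain ⟨y0, hy0, w0, hw0, hyw0⟩ := Set.mem_sub.1 hqc.1
  obtain ⟨x0, hx0, hx0e⟩ := hw0
  have hy0x0 : y0 = fun i => A i x0 := by rw [sub_eq_zero] at hyw0; rw [hyw0, ← hx0e]
  have hfbot : ∀ x, f x ≠ ⊥ := hf.1.2
  have hgbot : ∀ j : Fin m, ∀ t : ℝ, gs j t ≠ ⊥ := fun j => (hgs j).1.2
  refine ⟨C1 + C2, ?_⟩
  intro Z hZ
  simp only [Set.mem_setOf_eq] at hZ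
  have hTZ := hT Z
  rw [hZ] at hTZ
  set a : X := ((m:ℝ)+1)⁻¹ • ∑ j, Z j with ha
  set RZ : Fin (m+1) → X := fun i => (2:ℝ) • a - Z i with hRZdef
  -- the prox of RZ is the constant vector a
  have hfix : proxH RZ = fun _ => a := by
    funext i
    have h2 : Z i = (2:ℝ) • proxH RZ i - RZ i := by
      have := congrFun hTZ i
      simpa using this
    apply smul_right_injective X (two_ne_zero (α := ℝ))
    show (2:ℝ) • proxH RZ i = (2:ℝ) • a
    have hRZi : RZ i = (2:ℝ) • a - Z i := rfl
    have h3 : Z i + RZ i = (2:ℝ) • proxH RZ i := eq_sub_iff_add_eq.1 h2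
    rw [← h3, hRZi]
    show Z i + ((2:ℝ) • a - Z i) = (2:ℝ) • a
    abel
  -- finiteness of values at a
  have hHbot : ∀ W : Fin (m+1) → X, Hf W ≠ ⊥ := by
    intro W
    rw [hHf, Ne, EReal.add_eq_bot_iff]
    push_neg
    exact ⟨esum_ne_bot _ _ fun i _ => hgbot i _, hfbot _⟩
  have hprox0 : ∀ W, Hf (fun _ => a) + ((((1:ℝ)/2) * ∑ i, ‖a - RZ i‖ ^ 2 : ℝ) : EReal)
      ≤ Hf W + ((((1:ℝ)/2) * ∑ i, ‖W i - RZ i‖ ^ 2 : ℝ) : EReal) := by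
    intro W
    have h := hproxH RZ W
    rw [hfix] at h
    exact h
  have hManetop : Hf (fun _ => a) ≠ ⊤ := by
    have hW0 : Hf (fun _ => x0) ≠ ⊤ := by
      rw [hHf]
      refine (EReal.add_lt_top ?_ ?_).ne
      · have := hy0
        simp only [edom, Set.mem_setOf_eq, hy0x0] at this
        exact this
      · exact hx0
    intro htop
    have hp := hprox0 (fun _ => x0)
    rw [htop, EReal.top_add_of_ne_bot (EReal.coe_ne_bot _)] at hp
    have : Hf (fun _ => x0) + ((((1:ℝ)/2) * ∑ i, ‖x0 - RZ i‖ ^ 2 : ℝ) : EReal) ≠ ⊤ :=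
      (EReal.add_lt_top hW0 (EReal.coe_ne_top _)).ne
    exact this (top_le_iff.1 hp)
  have hfa_ne_top : f a ≠ ⊤ := by
    intro htop
    apply hManetop
    rw [hHf]
    show (∑ i : Fin m, gs i (A i a)) + f a = ⊤
    rw [htop, add_comm]
    exact EReal.top_add_of_ne_bot (esum_ne_bot _ _ fun i _ => hgbot i _)
  have hga_ne_top : ∀ j : Fin m, gs j (A j a) ≠ ⊤ := by
    intro j htop
    apply hManetop
    rw [hHf]
    show (∑ i : Fin m, gs i (A i a)) + f a = ⊤
    rw [esum_eq_top Finset.univ (fun i => gs i (A i a)) (fun i _ => hgbot i _)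
      (Finset.mem_univ j) htop]
    exact EReal.top_add_of_ne_bot (hfbot a)
  obtain ⟨rf, hrf⟩ : ∃ r : ℝ, f a = (r : EReal) :=
    ⟨(f a).toReal, (EReal.coe_toReal hfa_ne_top (hfbot a)).symm⟩
  obtain ⟨rg, hrg⟩ : ∃ rg : Fin m → ℝ, ∀ j, gs j (A j a) = ((rg j : ℝ) : EReal) :=
    ⟨fun j => (gs j (A j a)).toReal,
      fun j => (EReal.coe_toReal (hga_ne_top j) (hgbot j _)).symm⟩
  have hsumga : (∑ i : Fin m, gs i (A i a)) = ((∑ j, rg j : ℝ) : EReal) := by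
    rw [ecoe_sum]
    exact Finset.sum_congr rfl fun j _ => hrg j
  have hHaR : Hf (fun _ => a) = ((∑ j, rg j + rf : ℝ) : EReal) := by
    rw [hHf]
    show (∑ i : Fin m, gs i (A i a)) + f a = _
    rw [hrf, hsumga, ← EReal.coe_add]
  -- subgradient inequalities for each g_j
  have hsubg : ∀ j : Fin m, ∀ w : X,
      ((⟪w - a, RZ j.castSucc - a⟫_ℝ + rg j : ℝ) : EReal) ≤ gs j (A j w) := by
    intro j
    have hconvj : EConvex (fun x : X => gs j (A j x)) := by
      intro x y c d hc hd hcd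
      have h := (hgs j).2.2 (A j x) (A j y) c d hc hd hcd
      simpa only [map_add, map_smul, smul_eq_mul] using h
    refine prox_subgrad _ hconvj (fun x => hgbot j _) a (RZ j.castSucc) (rg j) (hrg j) ?_
    intro w
    set W : Fin (m+1) → X := Function.update (fun _ : Fin (m+1) => a) j.castSucc w with hWdef
    have hWlast : W (Fin.last m) = a := Function.update_of_ne (Fin.castSucc_lt_last j).ne' _ _
    have hWj : W j.castSucc = w := Function.update_self _ _ _
    have hWo : ∀ i : Fin (m+1), i ≠ j.castSucc → W i = a :=
      fun i hi => Function.update_of_ne hi _ _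
    have hHfW : Hf W = gs j (A j w)
        + ((∑ j' ∈ Finset.univ.erase j, rg j' + rf : ℝ) : EReal) := by
      rw [hHf, hWlast, hrf,
        ← Finset.add_sum_erase Finset.univ (fun j' => gs j' (A j' (W j'.castSucc)))
          (Finset.mem_univ j)]
      have herase : (∑ j' ∈ Finset.univ.erase j, gs j' (A j' (W j'.castSucc)))
          = ((∑ j' ∈ Finset.univ.erase j, rg j' : ℝ) : EReal) := by
        rw [ecoe_sum]
        refine Finset.sum_congr rfl fun j' hj' => ?_
        rw [hWo j'.castSucc
          (fun hh => (Finset.ne_of_mem_erase hj') (Fin.castSucc_injective _ hh)), hrg j']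
      rw [hWj, herase, add_assoc, ← EReal.coe_add]
    have hsq1 : (∑ i, ‖W i - RZ i‖^2 : ℝ) = ‖w - RZ j.castSucc‖^2
        + ∑ i ∈ Finset.univ.erase j.castSucc, ‖a - RZ i‖^2 := by
      rw [← Finset.add_sum_erase Finset.univ (fun i => ‖W i - RZ i‖^2)
        (Finset.mem_univ j.castSucc), hWj]
      congr 1
      refine Finset.sum_congr rfl fun i hi => ?_
      rw [hWo i (Finset.ne_of_mem_erase hi)]
    have hsq2 : (∑ i, ‖a - RZ i‖^2 : ℝ) = ‖a - RZ j.castSucc‖^2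
        + ∑ i ∈ Finset.univ.erase j.castSucc, ‖a - RZ i‖^2 :=
      (Finset.add_sum_erase _ (fun i => ‖a - RZ i‖^2) (Finset.mem_univ _)).symm
    have hp := hprox0 W
    rw [hHaR, hHfW, hsq1, hsq2] at hp
    have hsplit : (∑ j', rg j') = rg j + ∑ j' ∈ Finset.univ.erase j, rg j' :=
      (Finset.add_sum_erase _ rg (Finset.mem_univ _)).symm
    apply ecancel (c := ∑ j' ∈ Finset.univ.erase j, rg j' + rf
      + (1/2) * ∑ i ∈ Finset.univ.erase j.castSucc, ‖a - RZ i‖^2)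
    calc ((rg j + 2⁻¹ * ‖a - RZ j.castSucc‖^2 : ℝ) : EReal)
          + ((∑ j' ∈ Finset.univ.erase j, rg j' + rf
            + (1/2) * ∑ i ∈ Finset.univ.erase j.castSucc, ‖a - RZ i‖^2 : ℝ) : EReal)
        = ((∑ j', rg j' + rf : ℝ) : EReal)
          + (((1:ℝ)/2 * (‖a - RZ j.castSucc‖^2
            + ∑ i ∈ Finset.univ.erase j.castSucc, ‖a - RZ i‖^2) : ℝ) : EReal) := by
          rw [← EReal.coe_add, ← EReal.coe_add, EReal.coe_eq_coe_iff, hsplit]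
          ring
      _ ≤ gs j (A j w) + ((∑ j' ∈ Finset.univ.erase j, rg j' + rf : ℝ) : EReal)
          + (((1:ℝ)/2 * (‖w - RZ j.castSucc‖^2
            + ∑ i ∈ Finset.univ.erase j.castSucc, ‖a - RZ i‖^2) : ℝ) : EReal) := hp
      _ = gs j (A j w) + ((2⁻¹ * ‖w - RZ j.castSucc‖^2 : ℝ) : EReal)
          + ((∑ j' ∈ Finset.univ.erase j, rg j' + rf
            + (1/2) * ∑ i ∈ Finset.univ.erase j.castSucc, ‖a - RZ i‖^2 : ℝ) : EReal) := by
          rw [add_assoc, add_assoc, ← EReal.coe_add, ← EReal.coe_add]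
          congr 1
          rw [EReal.coe_eq_coe_iff]
          ring
  -- subgradient inequality for f
  have hsubf : ∀ w : X,
      ((⟪w - a, RZ (Fin.last m) - a⟫_ℝ + rf : ℝ) : EReal) ≤ f w := by
    refine prox_subgrad f hf.2.2 hfbot a (RZ (Fin.last m)) rf hrf ?_
    intro w
    set W : Fin (m+1) → X := Function.update (fun _ : Fin (m+1) => a) (Fin.last m) w with hWdef
    have hWlast : W (Fin.last m) = w := Function.update_self _ _ _
    have hWo : ∀ i : Fin (m+1), i ≠ Fin.last m → W i = a :=
      fun i hi => Function.update_of_ne hi _ _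
    have hHfW : Hf W = f w + ((∑ j', rg j' : ℝ) : EReal) := by
      rw [hHf, hWlast]
      have hsum : (∑ i : Fin m, gs i (A i (W i.castSucc))) = ((∑ j', rg j' : ℝ) : EReal) := by
        rw [ecoe_sum]
        refine Finset.sum_congr rfl fun j' _ => ?_
        rw [hWo j'.castSucc (Fin.castSucc_lt_last j').ne, hrg j']
      rw [hsum, add_comm]
    have hsq1 : (∑ i, ‖W i - RZ i‖^2 : ℝ) = ‖w - RZ (Fin.last m)‖^2
        + ∑ i ∈ Finset.univ.erase (Fin.last m), ‖a - RZ i‖^2 := by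
      rw [← Finset.add_sum_erase Finset.univ (fun i => ‖W i - RZ i‖^2)
        (Finset.mem_univ (Fin.last m)), hWlast]
      congr 1
      refine Finset.sum_congr rfl fun i hi => ?_
      rw [hWo i (Finset.ne_of_mem_erase hi)]
    have hsq2 : (∑ i, ‖a - RZ i‖^2 : ℝ) = ‖a - RZ (Fin.last m)‖^2
        + ∑ i ∈ Finset.univ.erase (Fin.last m), ‖a - RZ i‖^2 :=
      (Finset.add_sum_erase _ (fun i => ‖a - RZ i‖^2) (Finset.mem_univ _)).symm
    have hp := hprox0 W
    rw [hHaR, hHfW, hsq1, hsq2] at hp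
    apply ecancel (c := ∑ j', rg j'
      + (1/2) * ∑ i ∈ Finset.univ.erase (Fin.last m), ‖a - RZ i‖^2)
    calc ((rf + 2⁻¹ * ‖a - RZ (Fin.last m)‖^2 : ℝ) : EReal)
          + ((∑ j', rg j'
            + (1/2) * ∑ i ∈ Finset.univ.erase (Fin.last m), ‖a - RZ i‖^2 : ℝ) : EReal)
        = ((∑ j', rg j' + rf : ℝ) : EReal)
          + (((1:ℝ)/2 * (‖a - RZ (Fin.last m)‖^2
            + ∑ i ∈ Finset.univ.erase (Fin.last m), ‖a - RZ i‖^2) : ℝ) : EReal) := by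
          rw [← EReal.coe_add, ← EReal.coe_add, EReal.coe_eq_coe_iff]
          ring
      _ ≤ f w + ((∑ j', rg j' : ℝ) : EReal)
          + (((1:ℝ)/2 * (‖w - RZ (Fin.last m)‖^2
            + ∑ i ∈ Finset.univ.erase (Fin.last m), ‖a - RZ i‖^2) : ℝ) : EReal) := hp
      _ = f w + ((2⁻¹ * ‖w - RZ (Fin.last m)‖^2 : ℝ) : EReal)
          + ((∑ j', rg j'
            + (1/2) * ∑ i ∈ Finset.univ.erase (Fin.last m), ‖a - RZ i‖^2 : ℝ) : EReal) := by
          rw [add_assoc, add_assoc, ← EReal.coe_add, ← EReal.coe_add]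
          congr 1
          rw [EReal.coe_eq_coe_iff]
          ring
  -- Riesz representation of the g-subgradients
  have hriesz : ∀ j : Fin m, ∃ s : ℝ,
      RZ j.castSucc - a = (A j).adjoint s ∧ s ∈ esubdiff (gs j) (A j a) := by
    intro j
    set u : X := RZ j.castSucc - a with hu
    set v : X := (A j).adjoint 1 with hv
    have hAv : ∀ x : X, ⟪x, v⟫_ℝ = A j x := by
      intro x
      rw [hv, ContinuousLinearMap.adjoint_inner_right]
      simp [RCLike.inner_apply]
    have hv0 : v ≠ 0 := by
      intro h0
      apply hA j
      ext x
      have h := hAv x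
      rw [h0, inner_zero_right] at h
      simpa using h.symm
    have hnv : ‖v‖^2 ≠ 0 := pow_ne_zero 2 (norm_ne_zero_iff.2 hv0)
    have hA_v : A j v = ‖v‖^2 := by rw [← hAv v, real_inner_self_eq_norm_sq]
    have horth : ∀ x : X, A j x = 0 → ⟪x, u⟫_ℝ = 0 := by
      intro x hx
      have h1 := hsubg j (a + x)
      have h2 := hsubg j (a - x)
      have e1 : A j (a + x) = A j a := by rw [map_add, hx, add_zero]
      have e2 : A j (a - x) = A j a := by rw [map_sub, hx, sub_zero]
      rw [e1, hrg j, EReal.coe_le_coe_iff] at h1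
      rw [e2, hrg j, EReal.coe_le_coe_iff] at h2
      have s1 : a + x - a = x := by abel
      have s2 : a - x - a = -x := by abel
      rw [s1] at h1
      rw [s2, inner_neg_left] at h2
      have : (u : X) = RZ j.castSucc - a := hu
      rw [← this] at h1 h2
      linarith
    have hadj : ∀ s : ℝ, (A j).adjoint s = s • v := by
      intro s
      rw [hv, ← map_smul]
      norm_num [smul_eq_mul]
    set s : ℝ := A j u / ‖v‖^2 with hs
    have hker : A j (u - s • v) = 0 := by
      rw [map_sub, map_smul, hA_v, smul_eq_mul, hs]
      field_simp
      ring
    have husv : u = s • v := by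
      have h1 : ⟪u - s • v, u⟫_ℝ = 0 := horth _ hker
      have h2 : ⟪u - s • v, v⟫_ℝ = 0 := by rw [hAv]; exact hker
      have h3 : ⟪u - s • v, u - s • v⟫_ℝ = 0 := by
        rw [inner_sub_right, h1, real_inner_smul_right, h2]
        ring
      have h4 : u - s • v = 0 := inner_self_eq_zero.1 h3
      rw [sub_eq_zero] at h4
      exact h4
    refine ⟨s, by rw [husv, hadj], ?_⟩
    intro y
    set w : X := a + ((y - A j a)/‖v‖^2) • v with hw
    have hAw : A j w = y := by
      have he : A j w = A j a + ((y - A j a)/‖v‖^2) * (A j v) := by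
        rw [hw]
        simp [map_add, map_smul, smul_eq_mul]
      rw [he, hA_v]
      field_simp
      ring
    have h1 := hsubg j w
    rw [hAw] at h1
    have hinner : ⟪w - a, RZ j.castSucc - a⟫_ℝ = (y - A j a) * s := by
      have hwa : w - a = ((y - A j a)/‖v‖^2) • v := by rw [hw]; abel
      have huu : RZ j.castSucc - a = s • v := husv
      rw [hwa, huu, real_inner_smul_left, real_inner_smul_right,
        real_inner_self_eq_norm_sq]
      field_simp
    rw [hinner] at h1
    have hiy : ⟪y - A j a, s⟫_ℝ = (y - A j a) * s := by simp [RCLike.inner_apply]; ring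
    rw [hiy, hrg j, ← EReal.coe_add]
    exact h1
  obtain ⟨sv, hsv⟩ : ∃ sv : Fin m → ℝ, ∀ j,
      (RZ j.castSucc - a = (A j).adjoint (sv j)) ∧ sv j ∈ esubdiff (gs j) (A j a) := by
    choose sv h1 h2 using hriesz
    exact ⟨sv, fun j => ⟨h1 j, h2 j⟩⟩
  -- last coordinate is a subgradient of f
  have hulast : RZ (Fin.last m) - a ∈ esubdiff f a := by
    intro y
    rw [hrf, ← EReal.coe_add]
    exact hsubf y
  -- the coordinates of RZ - a sum to zero
  have hm : ((m:ℝ)+1) ≠ 0 := by positivity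
  have husum : ∑ i, (RZ i - a) = 0 := by
    have he : ∀ i : Fin (m+1), RZ i - a = a - Z i := by
      intro i
      show (2:ℝ) • a - Z i - a = a - Z i
      rw [two_smul]
      abel
    rw [Finset.sum_congr rfl fun i _ => he i, Finset.sum_sub_distrib,
      Finset.sum_const, Finset.card_univ, Fintype.card_fin]
    have hZs : ∑ j, Z j = ((m:ℝ)+1) • a := by
      rw [ha, smul_smul, mul_inv_cancel₀ hm, one_smul]
    rw [hZs, ← Nat.cast_smul_eq_nsmul ℝ]
    push_cast
    rw [sub_self]
  have hulast_eq : RZ (Fin.last m) - a = -∑ j : Fin m, (A j).adjoint (sv j) := by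
    have h1 : (∑ j : Fin m, (RZ j.castSucc - a)) + (RZ (Fin.last m) - a) = 0 := by
      rw [← Fin.sum_univ_castSucc (fun i => RZ i - a)]
      exact husum
    rw [Finset.sum_congr rfl (fun j _ => (hsv j).1)] at h1
    exact eq_neg_of_add_eq_zero_right h1
  -- a is a minimizer
  have haSp : a ∈ Sp := by
    rw [hSpdef]
    simp only [argminSet, Set.mem_setOf_eq]
    intro y
    have h1 := hsubf y
    have h2 : ∀ j, (((A j y - A j a) * sv j + rg j : ℝ) : EReal) ≤ gs j (A j y) := by
      intro j
      have h := (hsv j).2 (A j y)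
      rw [hrg j, ← EReal.coe_add] at h
      have : ⟪A j y - A j a, sv j⟫_ℝ = (A j y - A j a) * sv j := by
        simp [RCLike.inner_apply]
        ring
      rw [this] at h
      exact h
    have h3 : ((∑ j, ((A j y - A j a) * sv j + rg j) : ℝ) : EReal) ≤ ∑ j, gs j (A j y) := by
      rw [ecoe_sum]
      exact Finset.sum_le_sum fun j _ => h2 j
    have h4 := add_le_add h1 h3
    rw [← EReal.coe_add] at h4
    have hzero : ⟪y - a, RZ (Fin.last m) - a⟫_ℝ + ∑ j, (A j y - A j a) * sv j = 0 := by
      have hsum : (∑ j, (A j y - A j a) * sv j)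
          = ⟪y - a, ∑ j, (A j).adjoint (sv j)⟫_ℝ := by
        rw [inner_sum]
        refine Finset.sum_congr rfl fun j _ => ?_
        rw [ContinuousLinearMap.adjoint_inner_right]
        simp [RCLike.inner_apply, map_sub]
        ring
      rw [hsum, ← inner_add_right, hulast_eq, neg_add_cancel, inner_zero_right]
    have hLHS : f a + ∑ i, gs i (A i a) = ((rf + ∑ j, rg j : ℝ) : EReal) := by
      rw [hrf, hsumga, ← EReal.coe_add]
    rw [hLHS]
    refine le_trans ?_ h4
    rw [EReal.coe_le_coe_iff, Finset.sum_add_distrib]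
    linarith [hzero]
  -- membership of the dual vector in the bounded set
  have humem : (fun i => RZ i - a) ∈ {Z : Fin (m + 1) → X | ∃ x ∈ Sp,
      (∀ j : Fin m, Z j.castSucc ∈ (A j).adjoint '' esubdiff (gs j) (A j x)) ∧
      Z (Fin.last m) ∈ esubdiff f x ∧
      ∃ s : Fin m → ℝ, (∀ i, s i ∈ esubdiff (gs i) (A i x)) ∧
        Z (Fin.last m) = -∑ i, (A i).adjoint (s i)} := by
    refine ⟨a, haSp, fun j => ⟨sv j, (hsv j).2, ((hsv j).1).symm⟩, hulast,
      sv, fun i => (hsv i).2, hulast_eq⟩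
  have hub : ‖(fun i => RZ i - a : Fin (m+1) → X)‖ ≤ C2 := hC2 _ humem
  have hua : ‖a‖ ≤ C1 := hC1 a haSp
  have h0C : (0:ℝ) ≤ C1 + C2 :=
    add_nonneg ((norm_nonneg a).trans hua) ((norm_nonneg _).trans hub)
  rw [pi_norm_le_iff_of_nonneg h0C]
  intro i
  have hZi : Z i = a - (RZ i - a) := by
    show Z i = a - ((2:ℝ) • a - Z i - a)
    rw [two_smul]
    abel
  rw [hZi]
  calc ‖a - (RZ i - a)‖ ≤ ‖a‖ + ‖RZ i - a‖ := norm_sub_le _ _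
    _ ≤ C1 + C2 := add_le_add hua ((norm_le_pi_norm (fun i => RZ i - a) i).trans hub)
end
end

section
/- Let X and K be real Hilbert spaces, f ∈ Γ₀(X), g ∈ Γ₀(K), and A : X → K a bounded linear operator such that S_p := argmin_{x∈X}(f(x) + g(Ax)) ≠ ∅, the qualification condition 0 ∈ sri(dom(g) − A(dom(f))) holds, and ‖Ǎ‖_op ≤ 1/u for some u > 0, where Ǎ : X × K → K : (x,y) ↦ Ax − y. Suppose the three sets S_p, ∂f(S_p) := ⋃_{x∈S_p} ∂f(x), and {ν ∈ K : −A*ν ∈ ∂f(S_p)} ∩ ∂g(K) are bounded, where ∂g(K) := ⋃_{y∈K} ∂g(y). Then both (i) the fixed point set of T_DRSI := (2 prox_F − I) ∘ (2 P_{N(Ǎ)} − I) on X × K (with F(x,y) := f(x)+g(y) and N(Ǎ) := {(x,Ax) : x ∈ X}) is bounded, and (ii) the fixed point set of T_LAL : X × K × K → X × K × K : (x,y,ν) ↦ (x_T, y_T, ν_T), where x_T := prox_f(x − u²(A*Ax − A*y) + u A*ν), y_T := prox_g(y − u²(−Ax + y) − u ν), ν_T := ν − u(A x_T − y_T), is bounded.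 -/
noncomputable section

open Filter Topology Bornology
open scoped InnerProductSpace Pointwise Classical

section Aux

variable {H : Type*} [NormedAddCommGroup H] [InnerProductSpace ℝ H]

lemma ereal_eq_coe_of_ne {x : EReal} (h1 : x ≠ ⊤) (h2 : x ≠ ⊥) : ∃ a : ℝ, x = (a : EReal) :=
  ⟨x.toReal, (EReal.coe_toReal h1 h2).symm⟩

lemma esubdiff_ne_top_s16 (f : H → EReal) (hproper : EProper f) {q d : H}
    (hd : d ∈ esubdiff f q) : f q ≠ ⊤ := by
  obtain ⟨⟨y0, hy0⟩, hbot⟩ := hproper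
  intro htop
  have h0 := hd y0
  rw [htop, EReal.add_top_of_ne_bot (EReal.coe_ne_bot _)] at h0
  obtain ⟨b, hb⟩ := ereal_eq_coe_of_ne hy0 (hbot y0)
  rw [hb] at h0
  exact EReal.coe_ne_top b (top_le_iff.mp h0)

lemma isProxPt_mem_esubdiff (f : H → EReal) (hconv : EConvex f) (hproper : EProper f)
    {v q : H} (h : IsProxPt f v q) : v - q ∈ esubdiff f q := by
  obtain ⟨⟨y0, hy0⟩, hbot⟩ := hproper
  have hfq : f q ≠ ⊤ := by
    intro htop
    have h0 := h y0
    rw [htop, EReal.top_add_of_ne_bot (EReal.coe_ne_bot _)] at h0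
    obtain ⟨b, hb⟩ := ereal_eq_coe_of_ne hy0 (hbot y0)
    rw [hb, ← EReal.coe_add] at h0
    exact EReal.coe_ne_top _ (top_le_iff.mp h0)
  obtain ⟨a, ha⟩ := ereal_eq_coe_of_ne hfq (hbot q)
  intro y
  by_cases hy : f y = ⊤
  · rw [hy]; exact le_top
  obtain ⟨b, hb⟩ := ereal_eq_coe_of_ne hy (hbot y)
  rw [ha, hb, ← EReal.coe_add, EReal.coe_le_coe_iff]
  set N : ℝ := ‖y - q‖ ^ 2 with hN
  have hN0 : 0 ≤ N := by positivity
  have key : ∀ t : ℝ, 0 < t → t ≤ 1 → a ≤ b + ⟪q - v, y - q⟫_ℝ + t * (N / 2) := by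
    intro t ht ht1
    have hyt : q + t • (y - q) = (1 - t) • q + t • y := by module
    have hcv := hconv q y (1 - t) t (by linarith) ht.le (by ring)
    rw [← hyt, ha, hb] at hcv
    have hprox := h (q + t • (y - q))
    rw [ha] at hprox
    have hcomb : (a : EReal) + (((1:ℝ)/2 * ‖q - v‖ ^ 2 : ℝ) : EReal)
        ≤ (((1 - t) * a + t * b : ℝ) : EReal)
          + (((1:ℝ)/2 * ‖q + t • (y - q) - v‖ ^ 2 : ℝ) : EReal) := by
      refine hprox.trans (add_le_add ?_ le_rfl)
      calc f (q + t • (y - q))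
          ≤ ((1-t : ℝ) : EReal) * ((a:ℝ) : EReal) + ((t:ℝ) : EReal) * ((b:ℝ) : EReal) := hcv
        _ = (((1 - t) * a + t * b : ℝ) : EReal) := by
            rw [← EReal.coe_mul, ← EReal.coe_mul, ← EReal.coe_add]
    rw [← EReal.coe_add, ← EReal.coe_add, EReal.coe_le_coe_iff] at hcomb
    have hexp : ‖q + t • (y - q) - v‖ ^ 2
        = ‖q - v‖ ^ 2 + 2 * (t * ⟪q - v, y - q⟫_ℝ) + t ^ 2 * N := by
      have e1 : q + t • (y - q) - v = (q - v) + t • (y - q) := by abel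
      rw [e1, @norm_add_sq_real, real_inner_smul_right, norm_smul, Real.norm_eq_abs,
        mul_pow, sq_abs, hN]
    rw [hexp] at hcomb
    have h2 : t * a ≤ t * (b + ⟪q - v, y - q⟫_ℝ + t * (N / 2)) := by nlinarith
    exact le_of_mul_le_mul_left h2 ht
  have hmain : a ≤ b + ⟪q - v, y - q⟫_ℝ := by
    refine le_of_forall_pos_le_add fun ε hε => ?_
    set t : ℝ := min 1 (ε / (N + 1)) with htd
    have ht0 : 0 < t := lt_min one_pos (by positivity)
    have h1 := key t ht0 (min_le_left _ _)
    have h3 : t * (N / 2) ≤ ε := by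
      have h4 : t ≤ ε / (N + 1) := min_le_right _ _
      have h5 : t * (N / 2) ≤ (ε / (N + 1)) * (N / 2) :=
        mul_le_mul_of_nonneg_right h4 (by positivity)
      have h6 : (ε / (N + 1)) * (N / 2) ≤ ε := by
        rw [div_mul_eq_mul_div, div_le_iff₀ (by positivity)]
        nlinarith
      linarith
    linarith
  have h1 : ⟪q - v, y - q⟫_ℝ = -⟪v - q, y - q⟫_ℝ := by
    rw [show q - v = -(v - q) from by abel, inner_neg_left]
  have hip : ⟪y - q, v - q⟫_ℝ = -⟪q - v, y - q⟫_ℝ := by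
    rw [h1, neg_neg, real_inner_comm]
  rw [hip]; linarith

end Aux

lemma mem_argminSet_of {X K : Type*}
    [NormedAddCommGroup X] [InnerProductSpace ℝ X] [CompleteSpace X]
    [NormedAddCommGroup K] [InnerProductSpace ℝ K] [CompleteSpace K]
    (f : X → EReal) (g : K → EReal) (hfp : EProper f) (hgp : EProper g)
    (A : X →L[ℝ] K) {p : X} {e : K}
    (hd : -(A.adjoint e) ∈ esubdiff f p) (he : e ∈ esubdiff g (A p)) :
    p ∈ argminSet fun x => f x + g (A x) := by
  obtain ⟨a, ha⟩ := ereal_eq_coe_of_ne (esubdiff_ne_top_s16 f hfp hd) (hfp.2 p)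
  obtain ⟨b, hb⟩ := ereal_eq_coe_of_ne (esubdiff_ne_top_s16 g hgp he) (hgp.2 (A p))
  intro v
  by_cases hv : f v = ⊤
  · show f p + g (A p) ≤ f v + g (A v)
    rw [hv, EReal.top_add_of_ne_bot (hgp.2 (A v))]; exact le_top
  by_cases hgv : g (A v) = ⊤
  · show f p + g (A p) ≤ f v + g (A v)
    rw [hgv, EReal.add_top_of_ne_bot (hfp.2 v)]; exact le_top
  obtain ⟨c, hc⟩ := ereal_eq_coe_of_ne hv (hfp.2 v)
  obtain ⟨d, hdq⟩ := ereal_eq_coe_of_ne hgv (hgp.2 (A v))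
  have h1 := hd v
  rw [ha, hc, ← EReal.coe_add, EReal.coe_le_coe_iff] at h1
  have h2 := he (A v)
  rw [hb, hdq, ← EReal.coe_add, EReal.coe_le_coe_iff] at h2
  show f p + g (A p) ≤ f v + g (A v)
  rw [ha, hb, hc, hdq, ← EReal.coe_add, ← EReal.coe_add, EReal.coe_le_coe_iff]
  have hadj : ⟪v - p, A.adjoint e⟫_ℝ = ⟪A v - A p, e⟫_ℝ := by
    rw [real_inner_comm, ContinuousLinearMap.adjoint_inner_left, ← map_sub, real_inner_comm]
  have hneg : ⟪v - p, -(A.adjoint e)⟫_ℝ = -⟪v - p, A.adjoint e⟫_ℝ := by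
    rw [inner_neg_right]
  rw [hneg, hadj] at h1
  linarith

lemma proj_orth {X K : Type*}
    [NormedAddCommGroup X] [InnerProductSpace ℝ X] [CompleteSpace X]
    [NormedAddCommGroup K] [InnerProductSpace ℝ K] [CompleteSpace K]
    (A : X →L[ℝ] K) (P : X × K → X × K)
    (hPmem : ∀ z, A (P z).1 = (P z).2)
    (hPmin : ∀ z w : X × K, A w.1 = w.2 →
      ‖z.1 - (P z).1‖ ^ 2 + ‖z.2 - (P z).2‖ ^ 2 ≤ ‖z.1 - w.1‖ ^ 2 + ‖z.2 - w.2‖ ^ 2)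
    (z : X × K) :
    (z.1 - (P z).1) + A.adjoint (z.2 - (P z).2) = 0 := by
  set a := z.1 - (P z).1 with hadef
  set b := z.2 - (P z).2 with hbdef
  have hv : ∀ v : X, ⟪a, v⟫_ℝ + ⟪b, A v⟫_ℝ = 0 := by
    intro v
    set α := ⟪a, v⟫_ℝ + ⟪b, A v⟫_ℝ with hα
    set β := ‖v‖ ^ 2 + ‖A v‖ ^ 2 with hβ
    have hβ0 : 0 ≤ β := by positivity
    have hq : ∀ t : ℝ, 0 ≤ -2 * t * α + t ^ 2 * β := by
      intro t
      have hw := hPmin z ((P z).1 + t • v, (P z).2 + t • (A v))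
        (by simp [map_add, map_smul, hPmem z])
      dsimp only at hw
      have e1 : z.1 - ((P z).1 + t • v) = a - t • v := by rw [hadef]; abel
      have e2 : z.2 - ((P z).2 + t • (A v)) = b - t • (A v) := by rw [hbdef]; abel
      rw [e1, e2] at hw
      have n1 : ‖a - t • v‖ ^ 2 = ‖a‖ ^ 2 - 2 * (t * ⟪a, v⟫_ℝ) + t ^ 2 * ‖v‖ ^ 2 := by
        rw [sub_eq_add_neg, @norm_add_sq_real, inner_neg_right, real_inner_smul_right,
          norm_neg, norm_smul, Real.norm_eq_abs, mul_pow, sq_abs]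
        ring
      have n2 : ‖b - t • (A v)‖ ^ 2
          = ‖b‖ ^ 2 - 2 * (t * ⟪b, A v⟫_ℝ) + t ^ 2 * ‖A v‖ ^ 2 := by
        rw [sub_eq_add_neg, @norm_add_sq_real, inner_neg_right, real_inner_smul_right,
          norm_neg, norm_smul, Real.norm_eq_abs, mul_pow, sq_abs]
        ring
      rw [n1, n2] at hw
      rw [hα, hβ]
      nlinarith [hw]
    have ht := hq (α / (β + 1))
    have hb1 : (0:ℝ) < β + 1 := by linarith
    have hsq : α ^ 2 ≤ 0 := by
      have h2 : 0 ≤ (-2 * (α / (β + 1)) * α + (α / (β + 1)) ^ 2 * β) * (β + 1) ^ 2 :=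
        mul_nonneg ht (by positivity)
      have h3 : (-2 * (α / (β + 1)) * α + (α / (β + 1)) ^ 2 * β) * (β + 1) ^ 2
          = -2 * α ^ 2 * (β + 1) + α ^ 2 * β := by
        field_simp
      rw [h3] at h2
      nlinarith
    have hz0 : α = 0 := by nlinarith [sq_nonneg α]
    exact hz0
  have hfin : ∀ v : X, ⟪a + A.adjoint b, v⟫_ℝ = 0 := by
    intro v
    rw [inner_add_left, ContinuousLinearMap.adjoint_inner_left]
    exact hv v
  have h0 := hfin (a + A.adjoint b)
  rwa [inner_self_eq_zero] at h0


/-- Corollary 1(a): if `S_p`, `∂f(S_p)`, and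
`{ν | -A*ν ∈ ∂f(S_p)} ∩ ∂g(K)` are bounded, then both the fixed point set of the DRS
operator of Type-I and the fixed point set of the LAL operator are bounded. -/

theorem statement16
    {X K : Type*} [NormedAddCommGroup X] [InnerProductSpace ℝ X] [CompleteSpace X]
    [NormedAddCommGroup K] [InnerProductSpace ℝ K] [CompleteSpace K]
    (f : X → EReal) (g : K → EReal) (hf : Gamma0 f) (hg : Gamma0 g)
    (A : X →L[ℝ] K)
    (Sp : Set X) (hSpdef : Sp = argminSet (fun x => f x + g (A x)))
    (hSp : Sp.Nonempty)
    (hqc : (0 : K) ∈ sriSet (edom g - (fun x => A x) '' edom f))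
    (u : ℝ) (hu : 0 < u)
    (hAcheck : ∀ (x : X) (y : K), ‖A x - y‖ ≤ (1 / u) * Real.sqrt (‖x‖ ^ 2 + ‖y‖ ^ 2))
    (hbSp : IsBounded Sp)
    (hbdf : IsBounded (⋃ x ∈ Sp, esubdiff f x))
    (hbdual : IsBounded
      ({ν : K | -(A.adjoint ν) ∈ ⋃ x ∈ Sp, esubdiff f x} ∩ ⋃ y : K, esubdiff g y))
    (proxf : X → X) (proxg : K → K)
    (hproxf : ∀ x, IsProxPt f x (proxf x)) (hproxg : ∀ y, IsProxPt g y (proxg y))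
    (P : X × K → X × K)
    (hPmem : ∀ z : X × K, A (P z).1 = (P z).2)
    (hPmin : ∀ z w : X × K, A w.1 = w.2 →
      ‖z.1 - (P z).1‖ ^ 2 + ‖z.2 - (P z).2‖ ^ 2 ≤ ‖z.1 - w.1‖ ^ 2 + ‖z.2 - w.2‖ ^ 2)
    (Tdrs : X × K → X × K)
    (hTdrs : ∀ z : X × K, Tdrs z =
      ((2:ℝ) • proxf ((2:ℝ) • P z - z).1 - ((2:ℝ) • P z - z).1,
       (2:ℝ) • proxg ((2:ℝ) • P z - z).2 - ((2:ℝ) • P z - z).2))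
    (Tlal : X × K × K → X × K × K)
    (hTlal : ∀ (x : X) (y ν : K), Tlal (x, y, ν) =
      (proxf (x - (u ^ 2) • (A.adjoint (A x) - A.adjoint y) + u • A.adjoint ν),
       proxg (y - (u ^ 2) • (-(A x) + y) - u • ν),
       ν - u • (A (proxf (x - (u ^ 2) • (A.adjoint (A x) - A.adjoint y) + u • A.adjoint ν))
                 - proxg (y - (u ^ 2) • (-(A x) + y) - u • ν)))) :
    IsBounded {z : X × K | Tdrs z = z} ∧ IsBounded {w : X × K × K | Tlal w = w} := by
  obtain ⟨C1, hC1⟩ := isBounded_iff_forall_norm_le.mp hbSp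
  obtain ⟨C2, hC2⟩ := isBounded_iff_forall_norm_le.mp hbdf
  obtain ⟨C3, hC3⟩ := isBounded_iff_forall_norm_le.mp hbdual
  constructor
  · rw [isBounded_iff_forall_norm_le]
    refine ⟨max (C1 + C2) (‖A‖ * C1 + C3), ?_⟩
    intro z hz
    simp only [Set.mem_setOf_eq] at hz
    have hzz := hTdrs z
    rw [hz] at hzz
    -- first component
    have hw1 : ((2:ℝ) • P z - z).1 = (2:ℝ) • (P z).1 - z.1 := rfl
    have hw2 : ((2:ℝ) • P z - z).2 = (2:ℝ) • (P z).2 - z.2 := rfl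
    have hfst := congrArg Prod.fst hzz
    have hsnd := congrArg Prod.snd hzz
    simp only [hw1, hw2] at hfst hsnd
    have h1 : proxf ((2:ℝ) • (P z).1 - z.1) = (P z).1 := by
      apply smul_right_injective X (two_ne_zero (α := ℝ))
      show (2:ℝ) • proxf ((2:ℝ) • (P z).1 - z.1) = (2:ℝ) • (P z).1
      have h2q : (2:ℝ) • proxf ((2:ℝ) • (P z).1 - z.1)
          = z.1 + ((2:ℝ) • (P z).1 - z.1) := sub_eq_iff_eq_add.mp hfst.symm
      rw [h2q]; abel
    have h2 : proxg ((2:ℝ) • (P z).2 - z.2) = (P z).2 := by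
      apply smul_right_injective K (two_ne_zero (α := ℝ))
      show (2:ℝ) • proxg ((2:ℝ) • (P z).2 - z.2) = (2:ℝ) • (P z).2
      have h2q : (2:ℝ) • proxg ((2:ℝ) • (P z).2 - z.2)
          = z.2 + ((2:ℝ) • (P z).2 - z.2) := sub_eq_iff_eq_add.mp hsnd.symm
      rw [h2q]; abel
    have hd : (P z).1 - z.1 ∈ esubdiff f (P z).1 := by
      have hh := isProxPt_mem_esubdiff f hf.2.2 hf.1 (hproxf ((2:ℝ) • (P z).1 - z.1))
      rw [h1] at hh
      have e : (2:ℝ) • (P z).1 - z.1 - (P z).1 = (P z).1 - z.1 := by module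
      rwa [e] at hh
    have he : (P z).2 - z.2 ∈ esubdiff g (P z).2 := by
      have hh := isProxPt_mem_esubdiff g hg.2.2 hg.1 (hproxg ((2:ℝ) • (P z).2 - z.2))
      rw [h2] at hh
      have e : (2:ℝ) • (P z).2 - z.2 - (P z).2 = (P z).2 - z.2 := by module
      rwa [e] at hh
    have horth := proj_orth A P hPmem hPmin z
    have hB : A.adjoint (z.2 - (P z).2) = -(z.1 - (P z).1) :=
      eq_neg_of_add_eq_zero_right horth
    have hde : (P z).1 - z.1 = -(A.adjoint ((P z).2 - z.2)) := by
      rw [show (P z).2 - z.2 = -(z.2 - (P z).2) from by abel, map_neg, hB, neg_neg]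
      abel
    have hmem : (P z).1 ∈ Sp := by
      rw [hSpdef]
      exact mem_argminSet_of f g hf.1 hg.1 A (hde ▸ hd)
        (by rw [hPmem z]; exact he)
    have hnp1 : ‖(P z).1‖ ≤ C1 := hC1 _ hmem
    have hnd : ‖(P z).1 - z.1‖ ≤ C2 := hC2 _ (Set.mem_biUnion hmem hd)
    have hne : ‖(P z).2 - z.2‖ ≤ C3 := by
      refine hC3 _ ⟨?_, Set.mem_iUnion.mpr ⟨(P z).2, he⟩⟩
      show -(A.adjoint ((P z).2 - z.2)) ∈ ⋃ x ∈ Sp, esubdiff f x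
      rw [← hde]
      exact Set.mem_biUnion hmem hd
    have hx1 : ‖z.1‖ ≤ C1 + C2 := by
      have e : z.1 = (P z).1 - ((P z).1 - z.1) := by abel
      calc ‖z.1‖ = ‖(P z).1 - ((P z).1 - z.1)‖ := by rw [← e]
        _ ≤ ‖(P z).1‖ + ‖(P z).1 - z.1‖ := norm_sub_le _ _
        _ ≤ C1 + C2 := add_le_add hnp1 hnd
    have hx2 : ‖z.2‖ ≤ ‖A‖ * C1 + C3 := by
      have e : z.2 = (P z).2 - ((P z).2 - z.2) := by abel
      calc ‖z.2‖ = ‖(P z).2 - ((P z).2 - z.2)‖ := by rw [← e]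
        _ ≤ ‖(P z).2‖ + ‖(P z).2 - z.2‖ := norm_sub_le _ _
        _ ≤ ‖A‖ * C1 + C3 := by
            refine add_le_add ?_ hne
            rw [← hPmem z]
            calc ‖A (P z).1‖ ≤ ‖A‖ * ‖(P z).1‖ := A.le_opNorm _
              _ ≤ ‖A‖ * C1 := mul_le_mul_of_nonneg_left hnp1 (norm_nonneg A)
    rw [Prod.norm_def]
    exact max_le_max hx1 hx2
  · rw [isBounded_iff_forall_norm_le]
    refine ⟨max C1 (max (‖A‖ * C1) (1 / u * C3)), ?_⟩
    rintro ⟨x, y, ν⟩ hw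
    simp only [Set.mem_setOf_eq] at hw
    rw [hTlal x y ν, Prod.mk.injEq, Prod.mk.injEq] at hw
    obtain ⟨h1, h2, h3⟩ := hw
    rw [h1, h2] at h3
    have hAx : A x = y := by
      have h4 : u • (A x - y) = 0 := sub_eq_self.mp h3
      have h5 := (smul_eq_zero.mp h4).resolve_left (ne_of_gt hu)
      exact sub_eq_zero.mp h5
    have hB1 : x - (u ^ 2) • (A.adjoint (A x) - A.adjoint y) + u • A.adjoint ν
        = x + u • A.adjoint ν := by rw [hAx]; simp
    have hB2 : y - (u ^ 2) • (-(A x) + y) - u • ν = y - u • ν := by rw [hAx]; simp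
    rw [hB1] at h1
    rw [hB2] at h2
    have hdx : u • A.adjoint ν ∈ esubdiff f x := by
      have hh := isProxPt_mem_esubdiff f hf.2.2 hf.1 (hproxf (x + u • A.adjoint ν))
      rw [h1] at hh
      simpa using hh
    have hey : -(u • ν) ∈ esubdiff g y := by
      have hh := isProxPt_mem_esubdiff g hg.2.2 hg.1 (hproxg (y - u • ν))
      rw [h2] at hh
      simpa using hh
    have hd' : -(A.adjoint (-(u • ν))) ∈ esubdiff f x := by
      rw [map_neg, neg_neg, map_smul]
      exact hdx
    have he' : -(u • ν) ∈ esubdiff g (A x) := by rw [hAx]; exact hey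
    have hxSp : x ∈ Sp := by
      rw [hSpdef]
      exact mem_argminSet_of f g hf.1 hg.1 A hd' he'
    have hnx : ‖x‖ ≤ C1 := hC1 _ hxSp
    have hny : ‖y‖ ≤ ‖A‖ * C1 := by
      rw [← hAx]
      calc ‖A x‖ ≤ ‖A‖ * ‖x‖ := A.le_opNorm _
        _ ≤ ‖A‖ * C1 := mul_le_mul_of_nonneg_left hnx (norm_nonneg A)
    have hνe : ‖-(u • ν)‖ ≤ C3 := by
      refine hC3 _ ⟨?_, Set.mem_iUnion.mpr ⟨y, hey⟩⟩
      show -(A.adjoint (-(u • ν))) ∈ ⋃ x ∈ Sp, esubdiff f x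
      rw [map_neg, neg_neg, map_smul]
      exact Set.mem_biUnion hxSp hdx
    have hun : u * ‖ν‖ ≤ C3 := by
      rwa [norm_neg, norm_smul, Real.norm_eq_abs, abs_of_pos hu] at hνe
    have hnν : ‖ν‖ ≤ 1 / u * C3 := by
      rw [one_div, inv_mul_eq_div, le_div_iff₀ hu]
      linarith [hun]
    have hnorm : ‖((x, y, ν) : X × K × K)‖ = max ‖x‖ (max ‖y‖ ‖ν‖) := by
      rw [Prod.norm_def, Prod.norm_def]
    rw [hnorm]
    exact max_le_max hnx (max_le_max hny hnν)
end
end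

section
/- Let z ∈ ℝ^N and let X ∈ ℝ^{N×p} be a matrix with no zero column. For j ∈ {1,…,2p}, set x_j := X_{:j} (the j-th column of X) if j ≤ p and x_j := −X_{:j−p} if j > p, and define the linear map M_j : ℝ^p → ℝ × ℝ^N : b ↦ (x_jᵀ X b, X b). Let q > 1, β > 0, and define g_{(j,q)} : ℝ × ℝ^N → (−∞,∞] by g_{(j,q)}(η, y) := ‖y − z‖^q / (β (η − x_jᵀz)^{q−1}) if η > x_jᵀz; g_{(j,q)}(η, y) := 0 if y = z and η = x_jᵀz; and g_{(j,q)}(η, y) := +∞ otherwise. Then for each j ∈ {1,…,2p}, dom(g_{(j,q)}) − M_j(ℝ^p) = ℝ × ℝ^N; in particular, 0 belongs to the relative interior of dom(g_{(j,q)}) − M_j(ℝ^p). -/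
noncomputable section

open Filter Topology Bornology
open scoped InnerProductSpace Pointwise Classical

/-- Relative interior (as in the paper): the points `x ∈ C` such that the cone generated
by `C - x` coincides with the linear span of `C - x`. -/
def riSet {H : Type*} [AddCommGroup H] [Module ℝ H] (C : Set H) : Set H :=
  {x | x ∈ C ∧
    {y | ∃ t : ℝ, 0 < t ∧ ∃ c ∈ C, y = t • (c - x)} =
      ((Submodule.span ℝ ((fun c => c - x) '' C) : Submodule ℝ H) : Set H)}

/-- The vector `x_j`: the `j`-th column of `X` (when `s = true`) or its negative
(when `s = false`); this enumerates `x_1, …, x_{2p}`. -/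
def colv {N p : ℕ} (Xm : Fin N → Fin p → ℝ) (s : Bool) (j : Fin p) : Fin N → ℝ :=
  fun k => if s then Xm k j else -Xm k j

/-- The linear map `M_j : ℝ^p → ℝ × ℝ^N`, `b ↦ (x_jᵀ X b, X b)`. -/
def Mjmap {N p : ℕ} (Xm : Fin N → Fin p → ℝ) (s : Bool) (j : Fin p) :
    (Fin p → ℝ) → ℝ × (Fin N → ℝ) :=
  fun b => (∑ k, colv Xm s j k * (∑ i, Xm k i * b i), fun k => ∑ i, Xm k i * b i)

/-- The function `g_{(j,q)}` from the TREX subproblems. -/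
def gjq {N : ℕ} (z : Fin N → ℝ) (xj : Fin N → ℝ) (q β : ℝ) :
    ℝ × (Fin N → ℝ) → EReal := fun w =>
  if (∑ k, xj k * z k) < w.1 then
    (((Real.sqrt (∑ k, (w.2 k - z k) ^ 2)) ^ q
        / (β * (w.1 - ∑ k, xj k * z k) ^ (q - 1)) : ℝ) : EReal)
  else if w.2 = z ∧ w.1 = ∑ k, xj k * z k then 0
  else ⊤

/-- Lemma 1: qualification condition for the TREX subproblems.
If `X` has no zero column then `dom g_{(j,q)} - M_j(ℝ^p) = ℝ × ℝ^N`; in particular `0`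
belongs to the relative interior of `dom g_{(j,q)} - M_j(ℝ^p)`. -/
theorem statement17
    {N p : ℕ} (z : Fin N → ℝ) (Xm : Fin N → Fin p → ℝ)
    (hcol : ∀ j : Fin p, (fun k => Xm k j) ≠ (0 : Fin N → ℝ))
    (q β : ℝ) (hq : 1 < q) (hβ : 0 < β) :
    ∀ (s : Bool) (j : Fin p),
      (edom (gjq z (colv Xm s j) q β) - Set.range (Mjmap Xm s j)
          = (Set.univ : Set (ℝ × (Fin N → ℝ)))) ∧
      (0 : ℝ × (Fin N → ℝ)) ∈
        riSet (edom (gjq z (colv Xm s j) q β) - Set.range (Mjmap Xm s j)) := by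
  intro s j
  set c : ℝ := ∑ k, colv Xm s j k * z k with hc
  have hsq : (0 : ℝ) < ∑ k, (Xm k j) ^ 2 := by
    have := hcol j
    have hne : ∑ k, (Xm k j) ^ 2 ≠ 0 := by
      intro h0
      apply this
      funext k
      have := (Finset.sum_eq_zero_iff_of_nonneg (fun i _ => sq_nonneg (Xm i j))).mp h0
        k (Finset.mem_univ k)
      simpa using pow_eq_zero_iff (n := 2) (by norm_num) |>.mp this
    exact lt_of_le_of_ne (Finset.sum_nonneg fun i _ => sq_nonneg _) (Ne.symm hne)
  set d : ℝ := ∑ k, colv Xm s j k * Xm k j with hd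
  have hdval : d = if s then ∑ k, (Xm k j)^2 else -∑ k, (Xm k j)^2 := by
    cases s <;> simp [hd, colv, Finset.sum_neg_distrib, sq, ← Finset.sum_neg_distrib]
      <;> ring_nf
  have hdne : d ≠ 0 := by
    cases s <;> simp [hdval] <;> positivity
  have hmain : edom (gjq z (colv Xm s j) q β) - Set.range (Mjmap Xm s j)
      = (Set.univ : Set (ℝ × (Fin N → ℝ))) := by
    apply Set.eq_univ_of_forall
    rintro ⟨a, b⟩
    set t : ℝ := (c + 1 - a) / d with ht
    set v := Mjmap Xm s j (t • (Pi.single j 1 : Fin p → ℝ)) with hv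
    have hv1 : v.1 = t * d := by
      simp only [hv, Mjmap]
      rw [Finset.mul_sum]
      apply Finset.sum_congr rfl
      intro k _
      have : (∑ i, Xm k i * (t • (Pi.single j 1 : Fin p → ℝ)) i) = Xm k j * t := by
        rw [Finset.sum_eq_single j]
        · simp
        · intro i _ hi; simp [Pi.single_apply, hi]
        · simp
      rw [this]; ring
    refine Set.mem_sub.mpr ⟨(a, b) + v, ?_, v, ⟨_, rfl⟩, by abel⟩
    have h1 : ((a, b) + v).1 = c + 1 := by
      simp [hv1, ht]
      field_simp
      ring
    simp only [edom, gjq, Set.mem_setOf_eq, h1]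
    rw [if_pos (by linarith)]
    exact EReal.coe_ne_top _
  refine ⟨hmain, ?_⟩
  rw [hmain]
  refine ⟨trivial, ?_⟩
  have him : ((fun c => c - (0 : ℝ × (Fin N → ℝ))) '' Set.univ) = Set.univ := by
    simp
  rw [him]
  ext y
  constructor
  · intro _; simp [Submodule.span_univ]
  · intro _; exact ⟨1, one_pos, y, trivial, by simp⟩
end
end

section
/- Let X ∈ ℝ^{N×p} be a matrix with no zero column, and for j ∈ {1,…,2p} set x_j := X_{:j} if j ≤ p and x_j := −X_{:j−p} if j > p, and define M_j : ℝ^p → ℝ × ℝ^N : b ↦ (x_jᵀ X b, X b) with adjoint M_jᵀ : ℝ × ℝ^N → ℝ^p : (η, y) ↦ η Xᵀ x_j + Xᵀ y. Let S ⊂ ℝ^p be a bounded set, and let φ ∈ Γ₀(ℝ^N) be supercoercive such that its Fenchel conjugate φ* is also supercoercive. Let φ̃ : ℝ × ℝ^N → (−∞,∞] be the perspective of φ, defined by φ̃(η, y) := η φ(y/η) if η > 0; φ̃(0, y) := sup_{x ∈ dom(φ)}(φ(x + y) − φ(x)); and φ̃(η, y) := +∞ if η < 0. Then for each j ∈ {1,…,2p},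 the set {(η, y) ∈ ℝ × ℝ^N : M_jᵀ(η, y) ∈ S} ∩ (⋃_{(η',y') ∈ ℝ × ℝ^N} ∂φ̃(η', y')) is bounded. -/
noncomputable section

open Filter Topology Bornology
open scoped InnerProductSpace Pointwise Classical

/-- Euclidean norm on `ℝ^N` (written as functions `Fin N → ℝ`). -/
def eunorm {N : ℕ} (y : Fin N → ℝ) : ℝ := Real.sqrt (∑ k, (y k) ^ 2)

/-- Supercoercivity: `φ(y)/‖y‖ → ∞` as `‖y‖ → ∞`. -/
def Supercoercive {N : ℕ} (φ : (Fin N → ℝ) → EReal) : Prop :=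
  ∀ M : ℝ, ∃ R : ℝ, ∀ y : Fin N → ℝ, R ≤ eunorm y → ((M * eunorm y : ℝ) : EReal) ≤ φ y

/-- Fenchel conjugate on `ℝ^N` with the Euclidean inner product. -/
def econjE {N : ℕ} (φ : (Fin N → ℝ) → EReal) (u : Fin N → ℝ) : EReal :=
  ⨆ y : Fin N → ℝ, (((∑ k, y k * u k : ℝ) : EReal) - φ y)

/-- The perspective `φ̃` of `φ`. -/
def pers {N : ℕ} (φ : (Fin N → ℝ) → EReal) : ℝ × (Fin N → ℝ) → EReal := fun w =>
  if 0 < w.1 then (w.1 : EReal) * φ (w.1⁻¹ • w.2)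
  else if w.1 = 0 then ⨆ x ∈ edom φ, (φ (x + w.2) - φ x)
  else ⊤

/-- Subdifferential of a function on `ℝ × ℝ^N` (Euclidean inner product). -/
def esubdiffRN {N : ℕ} (F : ℝ × (Fin N → ℝ) → EReal) (w : ℝ × (Fin N → ℝ)) :
    Set (ℝ × (Fin N → ℝ)) :=
  {v | ∀ r : ℝ × (Fin N → ℝ),
    (((r.1 - w.1) * v.1 + ∑ k, (r.2 k - w.2 k) * v.2 k : ℝ) : EReal) + F w ≤ F r}

private lemma aux_nonpos (d C : ℝ) (h : ∀ η : ℝ, 0 < η → η * d ≤ C) : d ≤ 0 := by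
  by_contra hd
  push_neg at hd
  have h1 := h 1 one_pos
  have hC : 0 < C + 1 := by nlinarith
  have h2 := h ((C + 1) / d) (by positivity)
  rw [div_mul_cancel₀ _ (ne_of_gt hd)] at h2
  linarith

private lemma pers_ne_bot {N : ℕ} (φ : (Fin N → ℝ) → EReal) (hp : EProper φ)
    (r : ℝ × (Fin N → ℝ)) : pers φ r ≠ ⊥ := by
  obtain ⟨⟨x₀, hx₀⟩, hbot⟩ := hp
  unfold pers
  split_ifs with h1 h2
  · by_cases ht : φ (r.1⁻¹ • r.2) = ⊤
    · rw [ht, EReal.mul_top_of_pos (by exact_mod_cast h1)]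
      simp
    · rw [← EReal.coe_toReal ht (hbot _), ← EReal.coe_mul]
      exact EReal.coe_ne_bot _
  · intro hsup
    have hterm : (φ (x₀ + r.2) - φ x₀) ≤ ⨆ x ∈ edom φ, (φ (x + r.2) - φ x) :=
      le_iSup₂ (f := fun x (_ : x ∈ edom φ) => φ (x + r.2) - φ x) x₀ hx₀
    rw [hsup, le_bot_iff] at hterm
    rw [← EReal.coe_toReal hx₀ (hbot x₀)] at hterm
    by_cases ht : φ (x₀ + r.2) = ⊤
    · rw [ht, EReal.top_sub_coe] at hterm
      exact (by simp : (⊤ : EReal) ≠ ⊥) hterm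
    · rw [← EReal.coe_toReal ht (hbot _), ← EReal.coe_sub] at hterm
      exact EReal.coe_ne_bot _ hterm
  · simp

private lemma subgrad_conj_le {N : ℕ} (φ : (Fin N → ℝ) → EReal) (hp : EProper φ)
    {v r : ℝ × (Fin N → ℝ)} (hv : v ∈ esubdiffRN (pers φ) r) :
    econjE φ v.2 ≤ ((-v.1 : ℝ) : EReal) := by
  obtain ⟨⟨x₀, hx₀⟩, hbot⟩ := hp
  have hperbot := pers_ne_bot φ ⟨⟨x₀, hx₀⟩, hbot⟩ r
  have hpertop : pers φ r ≠ ⊤ := by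
    intro htop
    have h := hv (1, x₀)
    rw [htop, EReal.add_top_of_ne_bot (EReal.coe_ne_bot _), top_le_iff] at h
    have hp1 : pers φ (1, x₀) = φ x₀ := by
      show (if (0:ℝ) < 1 then ((1:ℝ) : EReal) * φ ((1:ℝ)⁻¹ • x₀) else
        if (1:ℝ) = 0 then ⨆ x ∈ edom φ, (φ (x + x₀) - φ x) else ⊤) = φ x₀
      rw [if_pos one_pos, inv_one, one_smul]
      norm_num
    rw [hp1] at h
    exact hx₀ h
  have hpr : pers φ r = ((pers φ r).toReal : EReal) := (EReal.coe_toReal hpertop hperbot).symm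
  set t := (pers φ r).toReal with ht
  have key : ∀ z : Fin N → ℝ, ((v.1 + ∑ k, z k * v.2 k : ℝ) : EReal) ≤ φ z := by
    intro z
    by_cases hz : φ z = ⊤
    · rw [hz]; exact le_top
    · have hzr : φ z = ((φ z).toReal : EReal) := (EReal.coe_toReal hz (hbot z)).symm
      set f := (φ z).toReal with hf
      rw [hzr, EReal.coe_le_coe_iff]
      have hall : ∀ η : ℝ, 0 < η →
          η * ((v.1 + ∑ k, z k * v.2 k) - f) ≤ r.1 * v.1 + (∑ k, r.2 k * v.2 k) - t := by
        intro η hη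
        have h := hv (η, η • z)
        have hpers : pers φ (η, η • z) = ((η * f : ℝ) : EReal) := by
          have hs : η⁻¹ • (η • z) = z := by
            rw [smul_smul, inv_mul_cancel₀ (ne_of_gt hη), one_smul]
          show (if (0:ℝ) < η then (η : EReal) * φ (η⁻¹ • (η • z)) else
            if η = 0 then ⨆ x ∈ edom φ, (φ (x + η • z) - φ x) else ⊤) = _
          rw [if_pos hη, hs, hzr, ← EReal.coe_mul]
        rw [hpers, hpr, ← EReal.coe_add, EReal.coe_le_coe_iff] at h
        have hsum : ∑ k, ((η • z) k - r.2 k) * v.2 k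
            = η * (∑ k, z k * v.2 k) - ∑ k, r.2 k * v.2 k := by
          rw [Finset.mul_sum, ← Finset.sum_sub_distrib]
          refine Finset.sum_congr rfl fun k _ => ?_
          simp [Pi.smul_apply]
          ring
        rw [hsum] at h
        nlinarith [h]
      have := aux_nonpos _ _ hall
      linarith
  rw [econjE]
  refine iSup_le fun z => ?_
  have hk := key z
  by_cases hz : φ z = ⊤
  · rw [hz]
    rw [EReal.sub_top]
    exact bot_le
  · have hzr : φ z = ((φ z).toReal : EReal) := (EReal.coe_toReal hz (hbot z)).symm
    rw [hzr] at hk ⊢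
    rw [EReal.coe_le_coe_iff] at hk
    rw [← EReal.coe_sub, EReal.coe_le_coe_iff]
    linarith

private lemma abs_trick (a dd B : ℝ) (h : |a + dd| ≤ B) : |a| ≤ B + |dd| := by
  have h2 := abs_add_le (a + dd) (-dd)
  simp only [add_neg_cancel_right, abs_neg] at h2
  linarith

/-- Claim 4: if `X` has no zero column, `S ⊂ ℝ^p` is bounded, and
`φ ∈ Γ₀(ℝ^N)` and `φ*` are supercoercive, then
`(M_jᵀ)⁻¹(S) ∩ ∂φ̃(ℝ × ℝ^N)` is bounded, where `φ̃` is the perspective of `φ` and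
`M_jᵀ(η, y) = η Xᵀ x_j + Xᵀ y`. -/
theorem statement18
    {N p : ℕ} (Xm : Fin N → Fin p → ℝ)
    (hcol : ∀ j : Fin p, (fun k => Xm k j) ≠ (0 : Fin N → ℝ))
    (S : Set (Fin p → ℝ)) (hS : IsBounded S)
    (φ : (Fin N → ℝ) → EReal) (hφ : Gamma0 φ)
    (hsc : Supercoercive φ) (hscconj : Supercoercive (econjE φ)) :
    ∀ (s : Bool) (j : Fin p),
      IsBounded
        ({w : ℝ × (Fin N → ℝ) |
            (fun i => w.1 * (∑ k, Xm k i * (if s then Xm k j else -Xm k j))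
              + ∑ k, Xm k i * w.2 k) ∈ S}
          ∩ ⋃ r : ℝ × (Fin N → ℝ), esubdiffRN (pers φ) r) := by
  intro s j
  obtain ⟨B, hB⟩ := isBounded_iff_forall_norm_le.mp hS
  have hQpos : 0 < ∑ k, (Xm k j)^2 := by
    rcases Function.ne_iff.mp (hcol j) with ⟨k, hk⟩
    have hk' : Xm k j ≠ 0 := by simpa using hk
    exact lt_of_lt_of_le (by positivity)
      (Finset.single_le_sum (f := fun k => (Xm k j)^2) (fun i _ => sq_nonneg _)
        (Finset.mem_univ k))
  set Q := ∑ k, (Xm k j)^2 with hQ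
  set sq := Real.sqrt Q with hsqdef
  have hsqpos : 0 < sq := Real.sqrt_pos.mpr hQpos
  have hsqsq : sq * sq = Q := by
    have := Real.sq_sqrt hQpos.le
    rw [pow_two] at this
    exact this
  obtain ⟨R, hR⟩ := hscconj (1/sq + 1)
  set D := max R (B/Q) with hD
  refine isBounded_iff_forall_norm_le.mpr ⟨max ((B + sq * D)/Q) D, ?_⟩
  rintro w ⟨hw1, hw2⟩
  rw [Set.mem_iUnion] at hw2
  obtain ⟨r, hvr⟩ := hw2
  have hconj := subgrad_conj_le φ hφ.1 hvr
  set n := eunorm w.2 with hn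
  have hn0 : 0 ≤ n := Real.sqrt_nonneg _
  set d := ∑ k, Xm k j * w.2 k with hd
  have hcs : |d| ≤ sq * n := by
    have h1 : d^2 ≤ Q * (∑ k, (w.2 k)^2) :=
      Finset.sum_mul_sq_le_sq_mul_sq Finset.univ (fun k => Xm k j) w.2
    calc |d| = Real.sqrt (d^2) := (Real.sqrt_sq_eq_abs d).symm
      _ ≤ Real.sqrt (Q * (∑ k, (w.2 k)^2)) := Real.sqrt_le_sqrt h1
      _ = sq * n := by rw [Real.sqrt_mul hQpos.le, hn, eunorm]
  have hnormS := hB _ hw1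
  have hcoordj : |w.1 * (∑ k, Xm k j * (if s then Xm k j else -Xm k j)) + d| ≤ B := by
    have h := norm_le_pi_norm (fun i => w.1 * (∑ k, Xm k i * (if s then Xm k j else -Xm k j))
              + ∑ k, Xm k i * w.2 k) j
    rw [Real.norm_eq_abs] at h
    exact h.trans hnormS
  have habs : |w.1| * Q ≤ B + |d| := by
    cases s
    · have hsum : (∑ k, Xm k j * (if (false : Bool) then Xm k j else -Xm k j)) = -Q := by
        rw [hQ, ← Finset.sum_neg_distrib]
        refine Finset.sum_congr rfl fun k _ => ?_
        simp
        ring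
      rw [hsum] at hcoordj
      have := abs_trick _ _ _ hcoordj
      rw [abs_mul, abs_neg, abs_of_pos hQpos] at this
      exact this
    · have hsum : (∑ k, Xm k j * (if (true : Bool) then Xm k j else -Xm k j)) = Q := by
        rw [hQ]
        refine Finset.sum_congr rfl fun k _ => ?_
        simp
        ring
      rw [hsum] at hcoordj
      have := abs_trick _ _ _ hcoordj
      rw [abs_mul, abs_of_pos hQpos] at this
      exact this
  have hnD : n ≤ D := by
    rcases le_total n R with hRn | hRn
    · exact hRn.trans (le_max_left _ _)
    · have h1 := hR w.2 hRn
      have h2 : (1/sq + 1) * n ≤ -w.1 := by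
        have h3 := le_trans h1 hconj
        exact_mod_cast h3
      have h4 : (1/sq + 1) * n * Q ≤ (-w.1) * Q :=
        mul_le_mul_of_nonneg_right h2 hQpos.le
      have e1 : (1/sq + 1) * n * Q = n * sq + n * Q := by
        rw [← hsqsq]
        field_simp
      have h5 : (-w.1) * Q ≤ |w.1| * Q := mul_le_mul_of_nonneg_right (neg_le_abs w.1) hQpos.le
      have h6 : n * Q ≤ B := by nlinarith [hcs]
      exact le_trans ((le_div_iff₀ hQpos).mpr h6) (le_max_right _ _)
  have hw1fin : |w.1| ≤ (B + sq * D)/Q := by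
    rw [le_div_iff₀ hQpos]
    have : |d| ≤ sq * D := hcs.trans (mul_le_mul_of_nonneg_left hnD hsqpos.le)
    linarith
  rw [Prod.norm_def]
  apply max_le
  · rw [Real.norm_eq_abs]
    exact hw1fin.trans (le_max_left _ _)
  · have hw2n : ‖w.2‖ ≤ n := by
      rw [pi_norm_le_iff_of_nonneg hn0]
      intro k
      rw [Real.norm_eq_abs, ← Real.sqrt_sq_eq_abs]
      exact Real.sqrt_le_sqrt
        (Finset.single_le_sum (f := fun k => (w.2 k)^2) (fun i _ => sq_nonneg _)
          (Finset.mem_univ k))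
    exact (hw2n.trans hnD).trans (le_max_right _ _)
end
end
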